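/- arXiv:1911.01011 — 3 statements merged into one kernel-verified Lean document; each statement's English description precedes it below -/
import Mathlib

section
/- For every i∈I, the linear maps r_i and ᵢr on '𝔣 map the radical 𝔍 of the bilinear form (−,−) into itself; in particular they descend to linear maps on 𝔣_β = '𝔣/𝔍. -/
open scoped TensorProduct

noncomputable section

/-- A Cartan datum on `I`. -/
structure CartanDatum (I : Type) where
  c : I → I → ℤ
  symm : ∀ i j, c i j = c j i
  pos : ∀ i, 0 < c i i
  even : ∀ i, Even (c i i)
  dvd : ∀ i j, i ≠ j → c i i ∣ 2 * c i j
  nonpos : ∀ i j, i ≠ j → 2 * c i j ≤ 0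

namespace CartanDatum

variable {I : Type} (cd : CartanDatum I)

/-- `d i = (i·i)/2`. -/
def d (i : I) : ℤ := cd.c i i / 2

/-- `a i j = 2(i·j)/(i·i)`. -/
def a (i j : I) : ℤ := 2 * cd.c i j / cd.c i i

/-- Extension of the pairing to `ℕ[I] × ℕ[I]`. -/
def dotN (ν μ : I →₀ ℕ) : ℤ :=
  ν.sum fun i m => μ.sum fun j n => (m : ℤ) * (n : ℤ) * cd.c i j

end CartanDatum

/-- A multiplicative bilinear form `ℕ[I] × ℕ[I] → 𝔽`. -/
structure MultForm (I 𝔽 : Type) [Field 𝔽] where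
  f : (I →₀ ℕ) → (I →₀ ℕ) → 𝔽
  add_left : ∀ ν ν' μ, f (ν + ν') μ = f ν μ * f ν' μ
  add_right : ∀ μ ν ν', f μ (ν + ν') = f μ ν * f μ ν'
  ne_zero : ∀ ν μ, f ν μ ≠ 0

/-- The trivial multiplicative bilinear form, constantly `1`. -/
def trivMF (I 𝔽 : Type) [Field 𝔽] : MultForm I 𝔽 :=
  ⟨fun _ _ => 1, fun _ _ _ => by ring, fun _ _ _ => by ring, fun _ _ => one_ne_zero⟩

variable {I : Type}

/-- The generator `i` of `ℕ[I]`. -/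
def δN (i : I) : I →₀ ℕ := Finsupp.single i 1

/-- The model for the free algebra `'𝔣` on the `θ i`. -/
abbrev FA (𝔽 I : Type) [Field 𝔽] := MonoidAlgebra 𝔽 (FreeMonoid I)

/-- The generator `θ i` of `'𝔣`. -/
def θ (𝔽 : Type) [Field 𝔽] {I : Type} (i : I) : FA 𝔽 I :=
  MonoidAlgebra.of 𝔽 (FreeMonoid I) (FreeMonoid.of i)

/-- The `ℕ[I]`-degree of a word. -/
def wt [DecidableEq I] (w : FreeMonoid I) : I →₀ ℕ :=
  Multiset.toFinsupp (↑(FreeMonoid.toList w))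

/-- Homogeneity of degree `ν` in `'𝔣`. -/
def IsHomog {𝔽 : Type} [Field 𝔽] [DecidableEq I] (ν : I →₀ ℕ) (x : FA 𝔽 I) : Prop :=
  ∀ w ∈ Finsupp.support (x.coeff : FreeMonoid I →₀ 𝔽), wt w = ν

/-- The model for `'𝔣 ⊗ '𝔣` (basis: pairs of words). -/
abbrev TA (𝔽 I : Type) [Field 𝔽] := MonoidAlgebra 𝔽 (FreeMonoid I × FreeMonoid I)

/-- The tensor `x ⊗ y` in the model of `'𝔣 ⊗ '𝔣`. -/
def tmul {𝔽 : Type} [Field 𝔽] (x y : FA 𝔽 I) : TA 𝔽 I :=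
  Finsupp.sum (x.coeff : FreeMonoid I →₀ 𝔽) fun w a =>
    Finsupp.sum (y.coeff : FreeMonoid I →₀ 𝔽) fun u b =>
      MonoidAlgebra.ofCoeff (Finsupp.single (w, u) (a * b) : (FreeMonoid I × FreeMonoid I) →₀ 𝔽)

/-- The twisted multiplication on `'𝔣 ⊗ '𝔣`:
`(x₁⊗x₂)(y₁⊗y₂) = v^{-|y₁|·|x₂|} β(|x₂|,|y₁|) x₁y₁ ⊗ x₂y₂`. -/
def tMul [DecidableEq I] {𝔽 : Type} [Field 𝔽] (cd : CartanDatum I) (v : 𝔽)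
    (β : MultForm I 𝔽) (z z' : TA 𝔽 I) : TA 𝔽 I :=
  Finsupp.sum (z.coeff : (FreeMonoid I × FreeMonoid I) →₀ 𝔽) fun p a =>
    Finsupp.sum (z'.coeff : (FreeMonoid I × FreeMonoid I) →₀ 𝔽) fun q b =>
      MonoidAlgebra.ofCoeff (Finsupp.single (p.1 * q.1, p.2 * q.2)
        (a * b * v ^ (-(cd.dotN (wt q.1) (wt p.2))) * β.f (wt p.2) (wt q.1))
        : (FreeMonoid I × FreeMonoid I) →₀ 𝔽)

/-- The bilinear form on `'𝔣 ⊗ '𝔣` induced by a form `B` on `'𝔣`: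
`(x₁⊗x₂, y₁⊗y₂) = α(|x₁|,|x₂|) (x₁,y₁) (x₂,y₂)` for homogeneous `x₁, x₂`. -/
def pairT [DecidableEq I] {𝔽 : Type} [Field 𝔽] (α : MultForm I 𝔽)
    (B : FA 𝔽 I →ₗ[𝔽] FA 𝔽 I →ₗ[𝔽] 𝔽) (z z' : TA 𝔽 I) : 𝔽 :=
  Finsupp.sum (z.coeff : (FreeMonoid I × FreeMonoid I) →₀ 𝔽) fun p a =>
    Finsupp.sum (z'.coeff : (FreeMonoid I × FreeMonoid I) →₀ 𝔽) fun q b =>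
      a * b * α.f (wt p.1) (wt p.2)
        * B (MonoidAlgebra.single p.1 1) (MonoidAlgebra.single q.1 1)
        * B (MonoidAlgebra.single p.2 1) (MonoidAlgebra.single q.2 1)

/-- The quantum integer `[n]_c`. -/
def qnum {𝔽 : Type} [Field 𝔽] (c : 𝔽) (n : ℕ) : 𝔽 :=
  (c ^ (n : ℤ) - c ^ (-(n : ℤ))) / (c - c⁻¹)

/-- The quantum factorial `[n]_c!`. -/
def qfact {𝔽 : Type} [Field 𝔽] (c : 𝔽) (n : ℕ) : 𝔽 :=
  ∏ k ∈ Finset.range n, qnum c (k + 1)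

/-- The divided power `θ_i^{(n)} = θ_i^n / [n]_{v_i}!`. -/
def θdiv [DecidableEq I] {𝔽 : Type} [Field 𝔽] (cd : CartanDatum I) (v : 𝔽)
    (i : I) (n : ℕ) : FA 𝔽 I :=
  (qfact (v ^ cd.d i) n)⁻¹ • (θ 𝔽 i) ^ n

/-- The twisted quantum Serre element
`D_{ij} = Σ_{k+k'=1-a_{ij}} (-1)^k β(i,j)^{-k} θ_i^{(k)} θ_j θ_i^{(k')}`. -/
def Dij [DecidableEq I] {𝔽 : Type} [Field 𝔽] (cd : CartanDatum I) (v : 𝔽)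
    (g : I → I → 𝔽) (i j : I) : FA 𝔽 I :=
  ∑ k ∈ Finset.range ((1 - cd.a i j).toNat + 1),
    ((-1 : 𝔽) ^ k * ((g i j)⁻¹) ^ k) •
      (θdiv cd v i k * θ 𝔽 j * θdiv cd v i ((1 - cd.a i j).toNat - k))

end

noncomputable section Aux
set_option linter.unusedSectionVars false
open scoped Classical

variable {I : Type} [DecidableEq I] {𝔽 : Type} [Field 𝔽]

/-! ### FreeMonoid and weight lemmas -/

lemma FM_of_mul_ne_one (j : I) (u : FreeMonoid I) : FreeMonoid.of j * u ≠ 1 := by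
  intro h
  have := congrArg FreeMonoid.toList h
  simp at this

lemma FM_one_ne_of (i : I) : (1 : FreeMonoid I) ≠ FreeMonoid.of i := by
  intro h
  have := congrArg FreeMonoid.toList h
  simp at this

lemma FM_of_mul_eq_of {j i : I} {u : FreeMonoid I} :
    FreeMonoid.of j * u = FreeMonoid.of i ↔ j = i ∧ u = 1 := by
  constructor
  · intro h
    have := congrArg FreeMonoid.toList h
    simp only [FreeMonoid.toList_mul, FreeMonoid.toList_of, List.singleton_append,
      List.cons.injEq] at this
    exact ⟨this.1, FreeMonoid.toList.injective (by simpa using this.2)⟩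
  · rintro ⟨rfl, rfl⟩
    simp

lemma wt_one : wt (1 : FreeMonoid I) = 0 := by
  simp [wt]

lemma wt_mul (w u : FreeMonoid I) : wt (w * u) = wt w + wt u := by
  simp [wt, FreeMonoid.toList_mul, ← Multiset.coe_add]

lemma wt_of (i : I) : wt (FreeMonoid.of i) = δN i := by
  simp [wt, δN, FreeMonoid.toList_of]

lemma wt_eq_zero {w : FreeMonoid I} (h : wt w = 0) : w = 1 := by
  apply FreeMonoid.toList.injective
  have : (FreeMonoid.toList w : Multiset I) = 0 := by
    apply Multiset.toFinsupp.injective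
    simpa [wt] using h
  simpa using this

lemma wt_eq_single {w : FreeMonoid I} {i : I} (h : wt w = δN i) : w = FreeMonoid.of i := by
  apply FreeMonoid.toList.injective
  have : (FreeMonoid.toList w : Multiset I) = ({i} : Multiset I) := by
    apply Multiset.toFinsupp.injective
    simpa [wt, δN] using h
  rw [FreeMonoid.toList_of]
  exact_mod_cast Multiset.coe_eq_singleton.mp this

end Aux

section Aux2
set_option linter.unusedSectionVars false
open scoped Classical

variable {I : Type} [DecidableEq I] {𝔽 : Type} [Field 𝔽]

lemma MultForm.zero_left (f : MultForm I 𝔽) (μ : I →₀ ℕ) : f.f 0 μ = 1 := by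
  have h := f.add_left 0 0 μ
  simp only [add_zero] at h
  have h2 := f.ne_zero 0 μ
  have h3 : f.f 0 μ * (f.f 0 μ - 1) = 0 := by linear_combination -h
  rcases mul_eq_zero.mp h3 with h4 | h4
  · exact absurd h4 h2
  · exact sub_eq_zero.mp h4

lemma MultForm.zero_right (f : MultForm I 𝔽) (μ : I →₀ ℕ) : f.f μ 0 = 1 := by
  have h := f.add_right μ 0 0
  simp only [add_zero] at h
  have h2 := f.ne_zero μ 0
  have h3 : f.f μ 0 * (f.f μ 0 - 1) = 0 := by linear_combination -h
  rcases mul_eq_zero.mp h3 with h4 | h4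
  · exact absurd h4 h2
  · exact sub_eq_zero.mp h4

lemma dotN_zero_left (cd : CartanDatum I) (μ : I →₀ ℕ) : cd.dotN 0 μ = 0 := by
  simp [CartanDatum.dotN]

lemma dotN_zero_right (cd : CartanDatum I) (ν : I →₀ ℕ) : cd.dotN ν 0 = 0 := by
  simp [CartanDatum.dotN]

lemma dotN_comm (cd : CartanDatum I) (ν μ : I →₀ ℕ) : cd.dotN ν μ = cd.dotN μ ν := by
  unfold CartanDatum.dotN
  rw [Finsupp.sum_comm]
  apply Finsupp.sum_congr
  intro j _
  apply Finsupp.sum_congr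
  intro i _
  rw [cd.symm]
  ring

lemma theta_def (i : I) : θ 𝔽 i = MonoidAlgebra.single (FreeMonoid.of i) (1 : 𝔽) := rfl

lemma one_def' : (1 : FA 𝔽 I) = MonoidAlgebra.single (1 : FreeMonoid I) (1 : 𝔽) :=
  MonoidAlgebra.one_def

lemma isHomog_single (w : FreeMonoid I) (a : 𝔽) :
    IsHomog (wt w) (MonoidAlgebra.single w a : FA 𝔽 I) := by
  intro u hu
  have hu' : u ∈ (Finsupp.single w a).support := hu
  have := Finsupp.support_single_subset hu'
  simp only [Finset.mem_singleton] at this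
  subst this; rfl

lemma isHomog_theta (i : I) : IsHomog (δN i) (θ 𝔽 i) := by
  rw [theta_def, ← wt_of i]
  exact isHomog_single _ _

/-! ### computation lemmas for `tmul`, `tMul`, `pairT` -/

lemma tmul_single (w u : FreeMonoid I) (a b : 𝔽) :
    tmul (MonoidAlgebra.single w a : FA 𝔽 I) (MonoidAlgebra.single u b) =
      MonoidAlgebra.single (w, u) (a * b) := by
  unfold tmul
  rw [MonoidAlgebra.coeff_single, MonoidAlgebra.coeff_single, Finsupp.sum_single_index,
    Finsupp.sum_single_index]
  · simp [MonoidAlgebra.single]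
  · simp
  · apply Finset.sum_eq_zero; intro q hq; simp

lemma tmul_one_one :
    tmul (1 : FA 𝔽 I) 1 = MonoidAlgebra.single ((1 : FreeMonoid I), (1 : FreeMonoid I)) (1 : 𝔽) := by
  rw [one_def', tmul_single, mul_one]

lemma tMul_single_left (cd : CartanDatum I) (v : 𝔽) (β : MultForm I 𝔽)
    (p : FreeMonoid I × FreeMonoid I) (c : 𝔽) (Z : TA 𝔽 I) :
    tMul cd v β (MonoidAlgebra.single p c) Z =
      Finsupp.sum Z.coeff fun q b =>
        MonoidAlgebra.single (p.1 * q.1, p.2 * q.2)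
          (c * b * v ^ (-(cd.dotN (wt q.1) (wt p.2))) * β.f (wt p.2) (wt q.1)) := by
  unfold tMul
  simp only [MonoidAlgebra.ofCoeff_single]
  rw [MonoidAlgebra.coeff_single, Finsupp.sum_single_index]
  apply Finset.sum_eq_zero; intro q hq; simp

lemma tMul_add_left (cd : CartanDatum I) (v : 𝔽) (β : MultForm I 𝔽) (W W' Z : TA 𝔽 I) :
    tMul cd v β (W + W') Z = tMul cd v β W Z + tMul cd v β W' Z := by
  unfold tMul
  simp only [MonoidAlgebra.ofCoeff_single]
  rw [MonoidAlgebra.coeff_add]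
  apply Finsupp.sum_add_index'
  · intro p
    apply Finset.sum_eq_zero; intro q hq; simp
  · intro p a a'
    rw [← Finsupp.sum_add]
    apply Finsupp.sum_congr
    intro q hq
    rw [← MonoidAlgebra.single_add]
    congr 1
    ring

lemma pairT_single_single (α : MultForm I 𝔽) (B : FA 𝔽 I →ₗ[𝔽] FA 𝔽 I →ₗ[𝔽] 𝔽)
    (p q : FreeMonoid I × FreeMonoid I) (a b : 𝔽) :
    pairT α B (MonoidAlgebra.single p a) (MonoidAlgebra.single q b) =
      a * b * α.f (wt p.1) (wt p.2) * B (MonoidAlgebra.single p.1 1) (MonoidAlgebra.single q.1 1)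
        * B (MonoidAlgebra.single p.2 1) (MonoidAlgebra.single q.2 1) := by
  unfold pairT
  rw [MonoidAlgebra.coeff_single, MonoidAlgebra.coeff_single, Finsupp.sum_single_index,
    Finsupp.sum_single_index]
  · simp
  · apply Finset.sum_eq_zero; intro q' hq'; simp

lemma pairT_single_right (α : MultForm I 𝔽) (B : FA 𝔽 I →ₗ[𝔽] FA 𝔽 I →ₗ[𝔽] 𝔽)
    (Z : TA 𝔽 I) (q : FreeMonoid I × FreeMonoid I) (b : 𝔽) :
    pairT α B Z (MonoidAlgebra.single q b) =
      Finsupp.sum Z.coeff fun p a =>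
        a * b * α.f (wt p.1) (wt p.2) * B (MonoidAlgebra.single p.1 1) (MonoidAlgebra.single q.1 1)
          * B (MonoidAlgebra.single p.2 1) (MonoidAlgebra.single q.2 1) := by
  unfold pairT
  apply Finsupp.sum_congr
  intro p hp
  rw [MonoidAlgebra.coeff_single, Finsupp.sum_single_index]
  simp

lemma pairT_add_right (α : MultForm I 𝔽) (B : FA 𝔽 I →ₗ[𝔽] FA 𝔽 I →ₗ[𝔽] 𝔽)
    (Z W W' : TA 𝔽 I) :
    pairT α B Z (W + W') = pairT α B Z W + pairT α B Z W' := by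
  unfold pairT
  rw [← Finsupp.sum_add]
  apply Finsupp.sum_congr
  intro p hp
  rw [MonoidAlgebra.coeff_add]
  apply Finsupp.sum_add_index'
  · intro q; simp
  · intro q b b'; ring

end Aux2

section Aux3
set_option linter.unusedSectionVars false
open scoped Classical

variable {I : Type} [DecidableEq I] {𝔽 : Type} [Field 𝔽]

lemma pairT_add_left (α : MultForm I 𝔽) (B : FA 𝔽 I →ₗ[𝔽] FA 𝔽 I →ₗ[𝔽] 𝔽)
    (W W' Z : TA 𝔽 I) :
    pairT α B (W + W') Z = pairT α B W Z + pairT α B W' Z := by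
  unfold pairT
  rw [MonoidAlgebra.coeff_add]
  apply Finsupp.sum_add_index'
  · intro p
    apply Finset.sum_eq_zero; intro q hq; simp
  · intro p a a'
    rw [← Finsupp.sum_add]
    apply Finsupp.sum_congr
    intro q hq
    ring

/-- Extraction of the part of an element of `TA` with a prescribed component,
as an additive map to `FA`. -/
noncomputable def pick (c : FreeMonoid I × FreeMonoid I → Prop)
    (g : FreeMonoid I × FreeMonoid I → FreeMonoid I) : TA 𝔽 I →+ FA 𝔽 I :=
  AddMonoidHom.mk'
    (fun Z => Finsupp.sum Z.coeff fun p a => if c p then MonoidAlgebra.single (g p) a else 0)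
    (by
      intro Z W
      rw [MonoidAlgebra.coeff_add]
      apply Finsupp.sum_add_index'
      · intro p; split <;> simp
      · intro p a a'; split <;> simp [MonoidAlgebra.single_add])

lemma pick_single (c : FreeMonoid I × FreeMonoid I → Prop)
    (g : FreeMonoid I × FreeMonoid I → FreeMonoid I)
    (p : FreeMonoid I × FreeMonoid I) (a : 𝔽) :
    pick c g (MonoidAlgebra.single p a) = if c p then MonoidAlgebra.single (g p) a else 0 := by
  have h0 : pick (𝔽 := 𝔽) c g (MonoidAlgebra.single p a)
      = Finsupp.sum (Finsupp.single p a)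
          (fun p a => if c p then MonoidAlgebra.single (g p) a else 0) := rfl
  rw [h0, Finsupp.sum_single_index]
  split <;> simp

lemma FM_exists_cons {w : FreeMonoid I} (hw : w ≠ 1) :
    ∃ (j : I) (u : FreeMonoid I), w = FreeMonoid.of j * u := by
  induction w using FreeMonoid.recOn with
  | one => exact absurd rfl hw
  | of_mul j u _ => exact ⟨j, u, rfl⟩

end Aux3

section Aux4
set_option linter.unusedSectionVars false
open scoped Classical

variable {I : Type} [DecidableEq I] {𝔽 : Type} [Field 𝔽]

lemma pick_apply (c : FreeMonoid I × FreeMonoid I → Prop)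
    (g : FreeMonoid I × FreeMonoid I → FreeMonoid I) (Z : TA 𝔽 I) :
    pick c g Z = Finsupp.sum Z.coeff fun p a => if c p then MonoidAlgebra.single (g p) a else 0 := rfl

lemma MA_smul_single (c : 𝔽) (w : FreeMonoid I) (a : 𝔽) :
    c • (MonoidAlgebra.single w a : FA 𝔽 I) = MonoidAlgebra.single w (c * a) :=
  by rw [MonoidAlgebra.smul_single, smul_eq_mul]

end Aux4

section
set_option maxHeartbeats 1000000
open scoped Classical
theorem ri_ir_preserve_radical
    {I : Type} [Fintype I] [DecidableEq I] (cd : CartanDatum I)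
    {𝔽 : Type} [Field 𝔽] [CharZero 𝔽] (v : 𝔽) (hv : Transcendental ℚ v)
    (α β : MultForm I 𝔽)
    (hαβ : ∀ i j : I, β.f (δN i) (δN j) * α.f (δN j) (δN i)
      = β.f (δN j) (δN i) * α.f (δN i) (δN j))
    (hββ : ∀ i j : I, β.f (δN i) (δN j) * β.f (δN j) (δN i) = 1)
    (hβii : ∀ i : I, β.f (δN i) (δN i) = 1)
    (r : FA 𝔽 I →ₗ[𝔽] TA 𝔽 I)
    (hr1 : r 1 = tmul 1 1)
    (hrθ : ∀ i : I, r (θ 𝔽 i) = tmul (θ 𝔽 i) 1 + tmul 1 (θ 𝔽 i))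
    (hrm : ∀ x y : FA 𝔽 I, r (x * y) = tMul cd v β (r x) (r y))
    (B : FA 𝔽 I →ₗ[𝔽] FA 𝔽 I →ₗ[𝔽] 𝔽)
    (hBsymm : ∀ x y, B x y = B y x)
    (hB1 : B 1 1 = 1)
    (hBθ : ∀ i j : I, B (θ 𝔽 i) (θ 𝔽 j) = if i = j then (1 - v ^ (-(cd.c i i)))⁻¹ else 0)
    (hBr : ∀ x y' y'', B x (y' * y'') = pairT α B (r x) (tmul y' y''))
    (hBl : ∀ x' x'' y, B (x' * x'') y = pairT α B (tmul x' x'') (r y))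
    (ri : I → (FA 𝔽 I →ₗ[𝔽] FA 𝔽 I))
    (hri1 : ∀ i, ri i 1 = 0)
    (hriθ : ∀ i j : I, ri i (θ 𝔽 j) = if i = j then 1 else 0)
    (hrim : ∀ (i : I) (ν μ : I →₀ ℕ) (x y : FA 𝔽 I), IsHomog ν x → IsHomog μ y →
      ri i (x * y) = (v ^ (-(cd.dotN (δN i) μ)) * β.f (δN i) μ) • (ri i x * y) + x * ri i y)
    (ir : I → (FA 𝔽 I →ₗ[𝔽] FA 𝔽 I))
    (hir1 : ∀ i, ir i 1 = 0)
    (hirθ : ∀ i j : I, ir i (θ 𝔽 j) = if i = j then 1 else 0)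
    (hirm : ∀ (i : I) (ν μ : I →₀ ℕ) (x y : FA 𝔽 I), IsHomog ν x → IsHomog μ y →
      ir i (x * y) = ir i x * y + (v ^ (-(cd.dotN (δN i) ν)) * β.f ν (δN i)) • (x * ir i y))
    :
    ∀ (i : I) (x : FA 𝔽 I), (∀ z, B x z = 0) →
      (∀ z, B (ri i x) z = 0) ∧ (∀ z, B (ir i x) z = 0) := by
  intro i x hx
  -- nonvanishing of the constant (θ_i, θ_i)
  have hci0 : (1 : 𝔽) - v ^ (-(cd.c i i)) ≠ 0 := by
    intro h
    have h1 : v ^ (-(cd.c i i)) = 1 := by linear_combination -h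
    rw [zpow_neg, inv_eq_one] at h1
    have hpos := cd.pos i
    have h2 : v ^ (cd.c i i).toNat = 1 := by
      rw [← zpow_natCast, Int.toNat_of_nonneg (le_of_lt hpos)]
      exact h1
    apply hv
    refine ⟨Polynomial.X ^ (cd.c i i).toNat - Polynomial.C 1,
      Polynomial.X_pow_sub_C_ne_zero (by omega) 1, ?_⟩
    simp [h2]
  -- (θ_j, 1) = 0
  have ht0 : ∀ j : I, B (θ 𝔽 j) 1 = 0 := by
    intro j
    have h := hBr (θ 𝔽 j) 1 1
    rw [mul_one] at h
    have e1 : tmul (θ 𝔽 j) (1 : FA 𝔽 I) =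
        MonoidAlgebra.single (FreeMonoid.of j, (1 : FreeMonoid I)) (1 : 𝔽) := by
      rw [theta_def, one_def', tmul_single, mul_one]
    have e2 : tmul (1 : FA 𝔽 I) (θ 𝔽 j) =
        MonoidAlgebra.single ((1 : FreeMonoid I), FreeMonoid.of j) (1 : 𝔽) := by
      rw [theta_def, one_def', tmul_single, mul_one]
    rw [hrθ j, e1, e2, tmul_one_one, pairT_add_left, pairT_single_single,
      pairT_single_single] at h
    simp only [wt_of, wt_one, MultForm.zero_left, MultForm.zero_right, one_mul, mul_one] at h
    rw [show (MonoidAlgebra.single (1 : FreeMonoid I) (1:𝔽) : FA 𝔽 I) = 1 from one_def'.symm,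
      show (MonoidAlgebra.single (FreeMonoid.of j) (1:𝔽) : FA 𝔽 I) = θ 𝔽 j from rfl, hB1] at h
    linear_combination -h
  -- (x, 1) = 0 for nonconstant words
  have hx1 : ∀ w : FreeMonoid I, w ≠ 1 → B (MonoidAlgebra.single w (1:𝔽)) 1 = 0 := by
    intro w hw
    obtain ⟨j, w', rfl⟩ := FM_exists_cons hw
    have hsm : θ 𝔽 j * MonoidAlgebra.single w' (1:𝔽) =
        MonoidAlgebra.single (FreeMonoid.of j * w') (1:𝔽) := by
      rw [theta_def, MonoidAlgebra.single_mul_single, one_mul]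
    rw [← hsm, hBl, hr1, tmul_one_one, theta_def, tmul_single, one_mul, pairT_single_single]
    rw [show (MonoidAlgebra.single (1 : FreeMonoid I) (1:𝔽) : FA 𝔽 I) = 1 from one_def'.symm,
      show (MonoidAlgebra.single (FreeMonoid.of j) (1:𝔽) : FA 𝔽 I) = θ 𝔽 j from rfl, ht0 j]
    ring
    -- orthogonality against generators
  have hO1 : ∀ (w : FreeMonoid I) (j : I), wt w ≠ δN j →
      B (MonoidAlgebra.single w (1:𝔽)) (θ 𝔽 j) = 0 := by
    intro w j hw
    by_cases hw1 : w = 1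
    · subst hw1
      rw [show (MonoidAlgebra.single (1 : FreeMonoid I) (1:𝔽) : FA 𝔽 I) = 1 from one_def'.symm,
        hBsymm, ht0 j]
    · obtain ⟨k, w', rfl⟩ := FM_exists_cons hw1
      have hsm : θ 𝔽 k * MonoidAlgebra.single w' (1:𝔽) =
          MonoidAlgebra.single (FreeMonoid.of k * w') (1:𝔽) := by
        rw [theta_def, MonoidAlgebra.single_mul_single, one_mul]
      have e1 : tmul (θ 𝔽 j) (1 : FA 𝔽 I) =
          MonoidAlgebra.single (FreeMonoid.of j, (1 : FreeMonoid I)) (1 : 𝔽) := by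
        rw [theta_def, one_def', tmul_single, mul_one]
      have e2 : tmul (1 : FA 𝔽 I) (θ 𝔽 j) =
          MonoidAlgebra.single ((1 : FreeMonoid I), FreeMonoid.of j) (1 : 𝔽) := by
        rw [theta_def, one_def', tmul_single, mul_one]
      rw [← hsm, hBl, hrθ j, e1, e2, theta_def, tmul_single, one_mul, pairT_add_right,
        pairT_single_single, pairT_single_single]
      rw [show (MonoidAlgebra.single (1 : FreeMonoid I) (1:𝔽) : FA 𝔽 I) = 1 from one_def'.symm,
        show (MonoidAlgebra.single (FreeMonoid.of j) (1:𝔽) : FA 𝔽 I) = θ 𝔽 j from rfl,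
        show (MonoidAlgebra.single (FreeMonoid.of k) (1:𝔽) : FA 𝔽 I) = θ 𝔽 k from rfl,
        ht0 k]
      by_cases hw' : w' = 1
      · subst hw'
        have hkj : k ≠ j := by
          intro hkj; subst hkj
          apply hw
          rw [wt_mul, wt_of, wt_one, add_zero]
        rw [hBθ k j, if_neg hkj,
          show (MonoidAlgebra.single (1 : FreeMonoid I) (1:𝔽) : FA 𝔽 I) = 1 from one_def'.symm]
        ring
      · rw [hx1 w' hw']
        ring
  -- decomposition of r on a word extended on the left
  have hrstep : ∀ (j : I) (w : FreeMonoid I),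
      r (MonoidAlgebra.single (FreeMonoid.of j * w) (1:𝔽)) =
        (Finsupp.sum (r (MonoidAlgebra.single w (1:𝔽))).coeff fun q a =>
          MonoidAlgebra.single (FreeMonoid.of j * q.1, q.2) a)
        + (Finsupp.sum (r (MonoidAlgebra.single w (1:𝔽))).coeff fun q a =>
          MonoidAlgebra.single (q.1, FreeMonoid.of j * q.2)
            (a * v ^ (-(cd.dotN (wt q.1) (δN j))) * β.f (δN j) (wt q.1))) := by
    intro j w
    have hsm : θ 𝔽 j * MonoidAlgebra.single w (1:𝔽) =
        MonoidAlgebra.single (FreeMonoid.of j * w) (1:𝔽) := by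
      rw [theta_def, MonoidAlgebra.single_mul_single, one_mul]
    have e1 : tmul (θ 𝔽 j) (1 : FA 𝔽 I) =
        MonoidAlgebra.single (FreeMonoid.of j, (1 : FreeMonoid I)) (1 : 𝔽) := by
      rw [theta_def, one_def', tmul_single, mul_one]
    have e2 : tmul (1 : FA 𝔽 I) (θ 𝔽 j) =
        MonoidAlgebra.single ((1 : FreeMonoid I), FreeMonoid.of j) (1 : 𝔽) := by
      rw [theta_def, one_def', tmul_single, mul_one]
    rw [← hsm, hrm, hrθ j, e1, e2, tMul_add_left, tMul_single_left, tMul_single_left]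
    dsimp only
    congr 1
    · apply Finsupp.sum_congr
      intro q hq
      simp only [wt_one, dotN_zero_right, neg_zero, zpow_zero, mul_one, one_mul,
        MultForm.zero_left]
    · apply Finsupp.sum_congr
      intro q hq
      simp only [wt_of, one_mul, mul_one]
  -- homogeneity of the support of r
  have hH : ∀ (w : FreeMonoid I) (p : FreeMonoid I × FreeMonoid I),
      p ∈ (r (MonoidAlgebra.single w (1:𝔽))).coeff.support →
      wt p.1 + wt p.2 = wt w := by
    intro w
    induction w using FreeMonoid.recOn with
    | one =>
      intro p hp
      rw [show (MonoidAlgebra.single (1:FreeMonoid I) (1:𝔽) : FA 𝔽 I) = 1 from one_def'.symm,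
        hr1, tmul_one_one] at hp
      have hps := Finsupp.support_single_subset hp
      simp only [Finset.mem_singleton] at hps
      subst hps
      simp [wt_one]
    | of_mul j w ihw =>
      intro p hp
      rw [hrstep j w, MonoidAlgebra.coeff_add, MonoidAlgebra.coeff_finsuppSum,
        MonoidAlgebra.coeff_finsuppSum] at hp
      rcases Finset.mem_union.mp (Finsupp.support_add hp) with h | h
      · rcases Finset.mem_biUnion.mp (Finsupp.support_sum h) with ⟨q, hq, hq2⟩
        have hps := Finsupp.support_single_subset hq2
        simp only [Finset.mem_singleton] at hps
        subst hps
        dsimp only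
        simp only [wt_mul, wt_of]
        rw [add_assoc, ihw q hq]
      · rcases Finset.mem_biUnion.mp (Finsupp.support_sum h) with ⟨q, hq, hq2⟩
        have hps := Finsupp.support_single_subset hq2
        simp only [Finset.mem_singleton] at hps
        subst hps
        dsimp only
        simp only [wt_mul, wt_of]
        rw [← ihw q hq]
        abel
  -- full orthogonality in distinct degrees
  have hO : ∀ (u w : FreeMonoid I), wt w ≠ wt u →
      B (MonoidAlgebra.single w (1:𝔽)) (MonoidAlgebra.single u (1:𝔽)) = 0 := by
    intro u
    induction u using FreeMonoid.recOn with
    | one =>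
      intro w hw
      rw [show (MonoidAlgebra.single (1 : FreeMonoid I) (1:𝔽) : FA 𝔽 I) = 1 from one_def'.symm]
      apply hx1
      intro hw1; subst hw1
      exact hw rfl
    | of_mul j u' ihu =>
      intro w hw
      have hsm : θ 𝔽 j * MonoidAlgebra.single u' (1:𝔽) =
          MonoidAlgebra.single (FreeMonoid.of j * u') (1:𝔽) := by
        rw [theta_def, MonoidAlgebra.single_mul_single, one_mul]
      rw [← hsm, hBr, theta_def, tmul_single, one_mul, pairT_single_right]
      apply Finset.sum_eq_zero
      intro p hp
      dsimp only
      by_cases hp1 : wt p.1 = δN j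
      · have hp2 : wt p.2 ≠ wt u' := by
          intro hc
          apply hw
          rw [← hH w p hp, hp1, hc, wt_mul, wt_of]
        rw [ihu p.2 hp2]
        ring
      · rw [show (MonoidAlgebra.single (FreeMonoid.of j) (1:𝔽) : FA 𝔽 I) = θ 𝔽 j from rfl,
          hO1 p.1 j hp1]
        ring
    -- helper computations for pick
  have hθmul1 : ∀ (c : FreeMonoid I × FreeMonoid I → Prop) (Z : TA 𝔽 I) (j : I),
      (Finsupp.sum Z.coeff fun q a =>
        if c q then MonoidAlgebra.single (FreeMonoid.of j * q.1) a else (0 : FA 𝔽 I))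
        = θ 𝔽 j * pick c Prod.fst Z := by
    intro c Z j
    rw [pick_apply, Finsupp.mul_sum]
    apply Finsupp.sum_congr
    intro q _
    split
    · rw [theta_def, MonoidAlgebra.single_mul_single, one_mul]
    · rw [mul_zero]
  have hθmul2 : ∀ (c : FreeMonoid I × FreeMonoid I → Prop) (Z : TA 𝔽 I) (j : I),
      (Finsupp.sum Z.coeff fun q a =>
        if c q then MonoidAlgebra.single (FreeMonoid.of j * q.2) a else (0 : FA 𝔽 I))
        = θ 𝔽 j * pick c Prod.snd Z := by
    intro c Z j
    rw [pick_apply, Finsupp.mul_sum]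
    apply Finsupp.sum_congr
    intro q _
    split
    · rw [theta_def, MonoidAlgebra.single_mul_single, one_mul]
    · rw [mul_zero]
  have hθmul2C : ∀ (c : FreeMonoid I × FreeMonoid I → Prop) (Z : TA 𝔽 I) (j : I) (C : 𝔽),
      (Finsupp.sum Z.coeff fun q a =>
        if c q then MonoidAlgebra.single (FreeMonoid.of j * q.2) (C * a) else (0 : FA 𝔽 I))
        = C • (θ 𝔽 j * pick c Prod.snd Z) := by
    intro c Z j C
    rw [pick_apply, Finsupp.mul_sum, Finsupp.smul_sum]
    apply Finsupp.sum_congr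
    intro q _
    split
    · rw [theta_def, MonoidAlgebra.single_mul_single, one_mul, MA_smul_single]
    · rw [mul_zero, smul_zero]
  have hpick1C : ∀ (c : FreeMonoid I × FreeMonoid I → Prop) (Z : TA 𝔽 I) (C : 𝔽),
      (Finsupp.sum Z.coeff fun q a =>
        if c q then MonoidAlgebra.single q.1 (C * a) else (0 : FA 𝔽 I))
        = C • pick c Prod.fst Z := by
    intro c Z C
    rw [pick_apply, Finsupp.smul_sum]
    apply Finsupp.sum_congr
    intro q _
    split
    · rw [MA_smul_single]
    · rw [smul_zero]
  -- the ε-parts of r(single w) are single w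
  have hsecε : ∀ w : FreeMonoid I,
      pick (fun p : FreeMonoid I × FreeMonoid I => p.2 = 1) Prod.fst
        (r (MonoidAlgebra.single w (1:𝔽))) = MonoidAlgebra.single w (1:𝔽) := by
    intro w
    induction w using FreeMonoid.recOn with
    | one =>
      rw [show (MonoidAlgebra.single (1:FreeMonoid I) (1:𝔽) : FA 𝔽 I) = 1 from one_def'.symm,
        hr1, tmul_one_one, pick_single, if_pos rfl]
      exact one_def'.symm
    | of_mul j w ihw =>
      rw [hrstep j w, map_add, map_finsuppSum, map_finsuppSum]
      have hA : (Finsupp.sum (r (MonoidAlgebra.single w (1:𝔽))).coeff fun q a =>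
          pick (fun p : FreeMonoid I × FreeMonoid I => p.2 = 1) Prod.fst
            (MonoidAlgebra.single (FreeMonoid.of j * q.1, q.2) a))
          = θ 𝔽 j * pick (fun p : FreeMonoid I × FreeMonoid I => p.2 = 1) Prod.fst
              (r (MonoidAlgebra.single w (1:𝔽))) := by
        rw [← hθmul1 (fun p : FreeMonoid I × FreeMonoid I => p.2 = 1)]
        apply Finsupp.sum_congr
        intro q _
        rw [pick_single]
      have hB2 : (Finsupp.sum (r (MonoidAlgebra.single w (1:𝔽))).coeff fun q a =>
          pick (fun p : FreeMonoid I × FreeMonoid I => p.2 = 1) Prod.fst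
            (MonoidAlgebra.single (q.1, FreeMonoid.of j * q.2)
              (a * v ^ (-(cd.dotN (wt q.1) (δN j))) * β.f (δN j) (wt q.1))))
          = 0 := by
        apply Finset.sum_eq_zero
        intro q _
        dsimp only
        rw [pick_single, if_neg]
        exact FM_of_mul_ne_one j q.2
      rw [hA, hB2, ihw, add_zero, theta_def, MonoidAlgebra.single_mul_single, one_mul]
  have hfstε : ∀ w : FreeMonoid I,
      pick (fun p : FreeMonoid I × FreeMonoid I => p.1 = 1) Prod.snd
        (r (MonoidAlgebra.single w (1:𝔽))) = MonoidAlgebra.single w (1:𝔽) := by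
    intro w
    induction w using FreeMonoid.recOn with
    | one =>
      rw [show (MonoidAlgebra.single (1:FreeMonoid I) (1:𝔽) : FA 𝔽 I) = 1 from one_def'.symm,
        hr1, tmul_one_one, pick_single, if_pos rfl]
      exact one_def'.symm
    | of_mul j w ihw =>
      rw [hrstep j w, map_add, map_finsuppSum, map_finsuppSum]
      have hA : (Finsupp.sum (r (MonoidAlgebra.single w (1:𝔽))).coeff fun q a =>
          pick (fun p : FreeMonoid I × FreeMonoid I => p.1 = 1) Prod.snd
            (MonoidAlgebra.single (FreeMonoid.of j * q.1, q.2) a))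
          = 0 := by
        apply Finset.sum_eq_zero
        intro q _
        dsimp only
        rw [pick_single, if_neg]
        exact FM_of_mul_ne_one j q.1
      have hB2 : (Finsupp.sum (r (MonoidAlgebra.single w (1:𝔽))).coeff fun q a =>
          pick (fun p : FreeMonoid I × FreeMonoid I => p.1 = 1) Prod.snd
            (MonoidAlgebra.single (q.1, FreeMonoid.of j * q.2)
              (a * v ^ (-(cd.dotN (wt q.1) (δN j))) * β.f (δN j) (wt q.1))))
          = θ 𝔽 j * pick (fun p : FreeMonoid I × FreeMonoid I => p.1 = 1) Prod.snd
              (r (MonoidAlgebra.single w (1:𝔽))) := by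
        rw [← hθmul2 (fun p : FreeMonoid I × FreeMonoid I => p.1 = 1)
          (r (MonoidAlgebra.single w (1:𝔽))) j]
        apply Finsupp.sum_congr
        intro q _
        rw [pick_single]
        dsimp only
        by_cases hq1 : q.1 = 1
        · rw [if_pos hq1, if_pos hq1, hq1, wt_one, dotN_zero_left, neg_zero, zpow_zero,
            mul_one, MultForm.zero_right, mul_one]
        · rw [if_neg hq1, if_neg hq1]
      rw [hA, hB2, ihw, zero_add, theta_def, MonoidAlgebra.single_mul_single, one_mul]
    -- the i-extractions of r(single w) compute ri and ir
  have hriZ : ∀ w : FreeMonoid I,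
      pick (fun p : FreeMonoid I × FreeMonoid I => p.2 = FreeMonoid.of i) Prod.fst
        (r (MonoidAlgebra.single w (1:𝔽))) = ri i (MonoidAlgebra.single w (1:𝔽)) := by
    intro w
    induction w using FreeMonoid.recOn with
    | one =>
      rw [show (MonoidAlgebra.single (1:FreeMonoid I) (1:𝔽) : FA 𝔽 I) = 1 from one_def'.symm,
        hr1, tmul_one_one, pick_single, if_neg (FM_one_ne_of i), hri1 i]
    | of_mul j w ihw =>
      rw [hrstep j w, map_add, map_finsuppSum, map_finsuppSum]
      have hA : (Finsupp.sum (r (MonoidAlgebra.single w (1:𝔽))).coeff fun q a =>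
          pick (fun p : FreeMonoid I × FreeMonoid I => p.2 = FreeMonoid.of i) Prod.fst
            (MonoidAlgebra.single (FreeMonoid.of j * q.1, q.2) a))
          = θ 𝔽 j * pick (fun p : FreeMonoid I × FreeMonoid I => p.2 = FreeMonoid.of i)
              Prod.fst (r (MonoidAlgebra.single w (1:𝔽))) := by
        rw [← hθmul1 (fun p : FreeMonoid I × FreeMonoid I => p.2 = FreeMonoid.of i)]
        apply Finsupp.sum_congr
        intro q _
        rw [pick_single]
      have hB2 : (Finsupp.sum (r (MonoidAlgebra.single w (1:𝔽))).coeff fun q a =>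
          pick (fun p : FreeMonoid I × FreeMonoid I => p.2 = FreeMonoid.of i) Prod.fst
            (MonoidAlgebra.single (q.1, FreeMonoid.of j * q.2)
              (a * v ^ (-(cd.dotN (wt q.1) (δN j))) * β.f (δN j) (wt q.1))))
          = if j = i then
              (v ^ (-(cd.dotN (δN i) (wt w))) * β.f (δN i) (wt w)) •
                pick (fun p : FreeMonoid I × FreeMonoid I => p.2 = 1) Prod.fst
                  (r (MonoidAlgebra.single w (1:𝔽)))
            else 0 := by
        by_cases hji : j = i
        · rcases hji with rfl
          rw [if_pos rfl,
            ← hpick1C (fun p : FreeMonoid I × FreeMonoid I => p.2 = 1)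
              (r (MonoidAlgebra.single w (1:𝔽)))
              (v ^ (-(cd.dotN (δN j) (wt w))) * β.f (δN j) (wt w))]
          apply Finsupp.sum_congr
          intro q hq
          rw [pick_single]
          dsimp only
          by_cases hq2 : q.2 = 1
          · have hwq : wt q.1 = wt w := by
              have h := hH w q hq
              rwa [hq2, wt_one, add_zero] at h
            rw [hq2, mul_one, if_pos rfl, if_pos rfl, hwq, dotN_comm cd (wt w) (δN j)]
            congr 1
            ring
          · rw [if_neg hq2, if_neg]
            intro hc
            exact hq2 (FM_of_mul_eq_of.mp hc).2
        · rw [if_neg hji]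
          apply Finset.sum_eq_zero
          intro q _
          dsimp only
          rw [pick_single, if_neg]
          intro hc
          exact hji (FM_of_mul_eq_of.mp hc).1
      rw [hA, hB2, ihw, hsecε w,
        show (MonoidAlgebra.single (FreeMonoid.of j * w) (1:𝔽) : FA 𝔽 I)
          = θ 𝔽 j * MonoidAlgebra.single w 1 by
            rw [theta_def, MonoidAlgebra.single_mul_single, one_mul],
        hrim i (δN j) (wt w) _ _ (isHomog_theta j) (isHomog_single w 1), hriθ i j]
      by_cases hji : j = i
      · rcases hji with rfl
        rw [if_pos rfl, if_pos rfl, one_mul, add_comm]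
      · rw [if_neg hji, if_neg (fun h => hji h.symm), zero_mul, smul_zero, add_zero, zero_add]
  have hirZ : ∀ w : FreeMonoid I,
      pick (fun p : FreeMonoid I × FreeMonoid I => p.1 = FreeMonoid.of i) Prod.snd
        (r (MonoidAlgebra.single w (1:𝔽))) = ir i (MonoidAlgebra.single w (1:𝔽)) := by
    intro w
    induction w using FreeMonoid.recOn with
    | one =>
      rw [show (MonoidAlgebra.single (1:FreeMonoid I) (1:𝔽) : FA 𝔽 I) = 1 from one_def'.symm,
        hr1, tmul_one_one, pick_single, if_neg (FM_one_ne_of i), hir1 i]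
    | of_mul j w ihw =>
      rw [hrstep j w, map_add, map_finsuppSum, map_finsuppSum]
      have hA : (Finsupp.sum (r (MonoidAlgebra.single w (1:𝔽))).coeff fun q a =>
          pick (fun p : FreeMonoid I × FreeMonoid I => p.1 = FreeMonoid.of i) Prod.snd
            (MonoidAlgebra.single (FreeMonoid.of j * q.1, q.2) a))
          = if j = i then
              pick (fun p : FreeMonoid I × FreeMonoid I => p.1 = 1) Prod.snd
                (r (MonoidAlgebra.single w (1:𝔽)))
            else 0 := by
        by_cases hji : j = i
        · rcases hji with rfl
          rw [if_pos rfl, pick_apply]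
          apply Finsupp.sum_congr
          intro q _
          rw [pick_single]
          dsimp only
          by_cases hq1 : q.1 = 1
          · rw [hq1, mul_one, if_pos rfl, if_pos rfl]
          · rw [if_neg hq1, if_neg]
            intro hc
            exact hq1 (FM_of_mul_eq_of.mp hc).2
        · rw [if_neg hji]
          apply Finset.sum_eq_zero
          intro q _
          dsimp only
          rw [pick_single, if_neg]
          intro hc
          exact hji (FM_of_mul_eq_of.mp hc).1
      have hB2 : (Finsupp.sum (r (MonoidAlgebra.single w (1:𝔽))).coeff fun q a =>
          pick (fun p : FreeMonoid I × FreeMonoid I => p.1 = FreeMonoid.of i) Prod.snd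
            (MonoidAlgebra.single (q.1, FreeMonoid.of j * q.2)
              (a * v ^ (-(cd.dotN (wt q.1) (δN j))) * β.f (δN j) (wt q.1))))
          = (v ^ (-(cd.dotN (δN i) (δN j))) * β.f (δN j) (δN i)) •
              (θ 𝔽 j * pick (fun p : FreeMonoid I × FreeMonoid I => p.1 = FreeMonoid.of i)
                Prod.snd (r (MonoidAlgebra.single w (1:𝔽)))) := by
        rw [← hθmul2C (fun p : FreeMonoid I × FreeMonoid I => p.1 = FreeMonoid.of i)
          (r (MonoidAlgebra.single w (1:𝔽))) j
          (v ^ (-(cd.dotN (δN i) (δN j))) * β.f (δN j) (δN i))]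
        apply Finsupp.sum_congr
        intro q _
        rw [pick_single]
        dsimp only
        by_cases hq1 : q.1 = FreeMonoid.of i
        · rw [if_pos hq1, if_pos hq1, hq1, wt_of, dotN_comm cd (δN i) (δN j)]
          congr 1
          ring
        · rw [if_neg hq1, if_neg hq1]
      rw [hA, hB2, ihw, hfstε w,
        show (MonoidAlgebra.single (FreeMonoid.of j * w) (1:𝔽) : FA 𝔽 I)
          = θ 𝔽 j * MonoidAlgebra.single w 1 by
            rw [theta_def, MonoidAlgebra.single_mul_single, one_mul],
        hirm i (δN j) (wt w) _ _ (isHomog_theta j) (isHomog_single w 1), hirθ i j]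
      by_cases hji : j = i
      · rcases hji with rfl
        rw [if_pos rfl, if_pos rfl, one_mul]
      · rw [if_neg hji, if_neg (fun h => hji h.symm), zero_mul, zero_add]
    -- expansion of B on a pick
  have hMAsmul : ∀ (u' : FreeMonoid I) (b : 𝔽),
      (MonoidAlgebra.single u' b : FA 𝔽 I) = b • MonoidAlgebra.single u' 1 := by
    intro u' b
    rw [MA_smul_single, mul_one]
  have hFsmul : ∀ (u' : FreeMonoid I) (b : 𝔽),
      (MonoidAlgebra.single u' b : FA 𝔽 I) = b • MonoidAlgebra.single u' 1 := hMAsmul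
  have hBpick : ∀ (Z : TA 𝔽 I) (c : FreeMonoid I × FreeMonoid I → Prop)
      (g : FreeMonoid I × FreeMonoid I → FreeMonoid I) (y : FA 𝔽 I),
      B (pick c g Z) y = Finsupp.sum Z.coeff fun p a =>
        if c p then a * B (MonoidAlgebra.single (g p) 1) y else 0 := by
    intro Z c g y
    have h0 : B (pick c g Z) y = B.flip y (pick c g Z) := (LinearMap.flip_apply B _ y).symm
    rw [h0, pick_apply, map_finsuppSum]
    apply Finsupp.sum_congr
    intro p _
    split
    · rw [hMAsmul, map_smul, smul_eq_mul, LinearMap.flip_apply]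
    · rw [map_zero]
  -- the main coupling identities
  have hM_ri : ∀ w u : FreeMonoid I,
      B (MonoidAlgebra.single w (1:𝔽)) (MonoidAlgebra.single u (1:𝔽) * θ 𝔽 i)
        = α.f (wt u) (δN i) * (1 - v ^ (-(cd.c i i)))⁻¹ *
            B (ri i (MonoidAlgebra.single w (1:𝔽))) (MonoidAlgebra.single u (1:𝔽)) := by
    intro w u
    rw [← hriZ w, hBpick, hBr, theta_def, tmul_single, mul_one, pairT_single_right,
      Finsupp.mul_sum]
    apply Finsupp.sum_congr
    intro p hp
    dsimp only
    by_cases hp2 : p.2 = FreeMonoid.of i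
    · rw [if_pos hp2, hp2, wt_of,
        show (MonoidAlgebra.single (FreeMonoid.of i) (1:𝔽) : FA 𝔽 I) = θ 𝔽 i from rfl,
        hBθ i i, if_pos rfl]
      by_cases hp1 : wt p.1 = wt u
      · rw [hp1]; ring
      · rw [hO u p.1 hp1]; ring
    · rw [if_neg hp2,
        show (MonoidAlgebra.single (FreeMonoid.of i) (1:𝔽) : FA 𝔽 I) = θ 𝔽 i from rfl,
        hO1 p.2 i (fun hc => hp2 (wt_eq_single hc))]
      ring
  have hM_ir : ∀ w u : FreeMonoid I,
      B (MonoidAlgebra.single w (1:𝔽)) (θ 𝔽 i * MonoidAlgebra.single u (1:𝔽))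
        = α.f (δN i) (wt u) * (1 - v ^ (-(cd.c i i)))⁻¹ *
            B (ir i (MonoidAlgebra.single w (1:𝔽))) (MonoidAlgebra.single u (1:𝔽)) := by
    intro w u
    rw [← hirZ w, hBpick, hBr, theta_def, tmul_single, one_mul, pairT_single_right,
      Finsupp.mul_sum]
    apply Finsupp.sum_congr
    intro p hp
    dsimp only
    by_cases hp1 : p.1 = FreeMonoid.of i
    · rw [if_pos hp1, hp1, wt_of,
        show (MonoidAlgebra.single (FreeMonoid.of i) (1:𝔽) : FA 𝔽 I) = θ 𝔽 i from rfl,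
        hBθ i i, if_pos rfl]
      by_cases hp2 : wt p.2 = wt u
      · rw [hp2]; ring
      · rw [hO u p.2 hp2]; ring
    · rw [if_neg hp1,
        show (MonoidAlgebra.single (FreeMonoid.of i) (1:𝔽) : FA 𝔽 I) = θ 𝔽 i from rfl,
        hO1 p.1 i (fun hc => hp1 (wt_eq_single hc))]
      ring
  -- nonvanishing of the coupling constants
  have hKri : ∀ u : I →₀ ℕ, α.f u (δN i) * (1 - v ^ (-(cd.c i i)))⁻¹ ≠ 0 :=
    fun u => mul_ne_zero (α.ne_zero _ _) (inv_ne_zero hci0)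
  have hKir : ∀ u : I →₀ ℕ, α.f (δN i) u * (1 - v ^ (-(cd.c i i)))⁻¹ ≠ 0 :=
    fun u => mul_ne_zero (α.ne_zero _ _) (inv_ne_zero hci0)
  -- both maps preserve the radical
  have hzri : ∀ u : FreeMonoid I, B (ri i x) (MonoidAlgebra.single u (1:𝔽)) = 0 := by
    intro u
    have hlin : ∀ y : FA 𝔽 I, B y (MonoidAlgebra.single u (1:𝔽) * θ 𝔽 i)
        = α.f (wt u) (δN i) * (1 - v ^ (-(cd.c i i)))⁻¹ *
            B (ri i y) (MonoidAlgebra.single u (1:𝔽)) := by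
      intro y
      induction y using MonoidAlgebra.induction_linear with
      | zero => simp
      | add f g hf hg => simp only [map_add, LinearMap.add_apply, hf, hg]; ring
      | single w a =>
        rw [hFsmul, map_smul, map_smul, map_smul, LinearMap.smul_apply, LinearMap.smul_apply,
          smul_eq_mul, smul_eq_mul, hM_ri w u]
        ring
    have hlin' := hlin x
    rw [hx _] at hlin'
    exact (mul_eq_zero.mp hlin'.symm).resolve_left (hKri (wt u))
  have hzir : ∀ u : FreeMonoid I, B (ir i x) (MonoidAlgebra.single u (1:𝔽)) = 0 := by
    intro u
    have hlin : ∀ y : FA 𝔽 I, B y (θ 𝔽 i * MonoidAlgebra.single u (1:𝔽))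
        = α.f (δN i) (wt u) * (1 - v ^ (-(cd.c i i)))⁻¹ *
            B (ir i y) (MonoidAlgebra.single u (1:𝔽)) := by
      intro y
      induction y using MonoidAlgebra.induction_linear with
      | zero => simp
      | add f g hf hg => simp only [map_add, LinearMap.add_apply, hf, hg]; ring
      | single w a =>
        rw [hFsmul, map_smul, map_smul, map_smul, LinearMap.smul_apply, LinearMap.smul_apply,
          smul_eq_mul, smul_eq_mul, hM_ir w u]
        ring
    have hlin' := hlin x
    rw [hx _] at hlin'
    exact (mul_eq_zero.mp hlin'.symm).resolve_left (hKir (wt u))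
  constructor
  · intro z
    conv_lhs => rw [← MonoidAlgebra.sum_coeff_single z]
    rw [map_finsuppSum]
    apply Finset.sum_eq_zero
    intro u _
    dsimp only
    rw [hFsmul, map_smul, smul_eq_mul, hzri u, mul_zero]
  · intro z
    conv_lhs => rw [← MonoidAlgebra.sum_coeff_single z]
    rw [map_finsuppSum]
    apply Finset.sum_eq_zero
    intro u _
    dsimp only
    rw [hFsmul, map_smul, smul_eq_mul, hzir u, mul_zero]

end
end

section
/- In the algebra 𝔣_β, the images of the generators θ_i satisfy the β-twisted quantum Serre relations: for all i≠j in I, Σ_{k+k'=1−a_{ij}} (−1)^k β(i,j)^{−k} θ_i^{(k)} θ_j θ_i^{(k')} = 0. -/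
open scoped TensorProduct

noncomputable section

variable {I : Type}

section AUX
variable {𝔽 : Type} [Field 𝔽] (q : 𝔽)


section scalars
variable (hq0 : q ≠ 0) (hq1 : ∀ N : ℤ, N ≠ 0 → q ^ N ≠ 1)

include hq0 hq1 in
lemma qden_ne : q - q⁻¹ ≠ 0 := by
  intro h
  have h' : q = q⁻¹ := by linear_combination h
  have h2 : q * q = 1 := by nth_rewrite 1 [h']; exact inv_mul_cancel₀ hq0
  have : q ^ (2:ℤ) = 1 := by
    rw [show (2:ℤ) = 1+1 by ring, zpow_add₀ hq0] ; simpa using h2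
  exact hq1 2 (by norm_num) this

include hq0 hq1 in
lemma qnum_ne (n : ℕ) (hn : 1 ≤ n) : qnum q n ≠ 0 := by
  have hd := qden_ne q hq0 hq1
  have hnum : q ^ (n:ℤ) - q ^ (-(n:ℤ)) ≠ 0 := by
    intro h
    have h' : q ^ (n:ℤ) = q ^ (-(n:ℤ)) := by linear_combination h
    have : q ^ ((n:ℤ) + (n:ℤ)) = 1 := by
      rw [zpow_add₀ hq0]
      nth_rewrite 2 [h']
      rw [← zpow_add₀ hq0] ; simp
    exact hq1 _ (by omega) this
  exact div_ne_zero hnum hd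

include hq0 hq1 in
lemma qfact_ne (n : ℕ) : qfact q n ≠ 0 := by
  refine Finset.prod_ne_zero_iff.mpr fun k _ => qnum_ne q hq0 hq1 (k+1) (by omega)

lemma qfact_succ (n : ℕ) : qfact q (n+1) = qfact q n * qnum q (n+1) :=
  Finset.prod_range_succ _ n

include hq0 in
lemma qnum_split (k n : ℕ) (hk : k ≤ n) :
    q ^ (k:ℤ) * qnum q (n-k) + q ^ ((k:ℤ)-(n:ℤ)) * qnum q k = qnum q n := by
  unfold qnum
  rw [Nat.cast_sub hk, ← mul_div_assoc, ← mul_div_assoc, ← add_div]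
  congr 1
  rw [mul_sub, mul_sub, ← zpow_add₀ hq0, ← zpow_add₀ hq0, ← zpow_add₀ hq0, ← zpow_add₀ hq0,
    show (k:ℤ) + ((n:ℤ)-(k:ℤ)) = (n:ℤ) by ring,
    show (k:ℤ) + -((n:ℤ)-(k:ℤ)) = 2*(k:ℤ)-(n:ℤ) by ring,
    show (k:ℤ) - (n:ℤ) + (k:ℤ) = 2*(k:ℤ)-(n:ℤ) by ring,
    show (k:ℤ) - (n:ℤ) + -(k:ℤ) = -(n:ℤ) by ring]
  ring

end scalars

section gauss
variable (hq0 : q ≠ 0) (hq1 : ∀ N : ℤ, N ≠ 0 → q ^ N ≠ 1)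

include hq0 hq1 in
lemma gauss_pascal (n : ℕ) (hn : 1 ≤ n) (k : ℕ) (hk : k ≤ n) :
    (qfact q k)⁻¹ * (qfact q (n-k))⁻¹
      = (qnum q n)⁻¹ * (q ^ (k:ℤ) *
          (if k < n then (qfact q k)⁻¹ * (qfact q (n-1-k))⁻¹ else 0)
        + q ^ ((k:ℤ)-(n:ℤ)) *
          (if k = 0 then 0 else
            if k-1 < n then (qfact q (k-1))⁻¹ * (qfact q (n-1-(k-1)))⁻¹ else 0)) := by
  have hfn : ∀ m : ℕ, 1 ≤ m → qfact q m = qfact q (m-1) * qnum q m := by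
    intro m hm
    have := qfact_succ q (m-1)
    rwa [show m-1+1 = m by omega] at this
  have hqn := qnum_ne q hq0 hq1 n hn
  rcases Nat.eq_zero_or_pos k with hk0 | hk1
  · subst hk0
    simp only [if_pos (by omega : 0 < n), if_pos rfl, Nat.sub_zero, eq_self_iff_true, if_true]
    rw [hfn n hn]
    simp only [qfact, Finset.range_zero, Finset.prod_empty, Nat.sub_zero, Nat.zero_sub]
    rw [mul_inv]
    field_simp
    simp
  rcases Nat.lt_or_ge k n with hkn | hkn
  · -- 1 ≤ k < n
    rw [if_pos hkn, if_neg (by omega), if_pos (by omega)]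
    have e1 : qfact q (n-1-k) = (qfact q (n-k)) / qnum q (n-k) := by
      rw [hfn (n-k) (by omega), show n-k-1 = n-1-k by omega]
      field_simp [qnum_ne q hq0 hq1 (n-k) (by omega)]
    have e2 : qfact q (k-1) = (qfact q k) / qnum q k := by
      rw [hfn k hk1]
      field_simp [qnum_ne q hq0 hq1 k hk1]
    rw [show n-1-(k-1) = n-k by omega, e1, e2]
    have hsplit := qnum_split q hq0 k n hk
    have hfk := qfact_ne q hq0 hq1 k
    have hfnk := qfact_ne q hq0 hq1 (n-k)
    have hnk := qnum_ne q hq0 hq1 (n-k) (by omega)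
    have hkk := qnum_ne q hq0 hq1 k hk1
    have key : (qnum q n)⁻¹ * (q ^ (k:ℤ) * ((qfact q k)⁻¹ * (qfact q (n-k) / qnum q (n-k))⁻¹)
        + q^((k:ℤ)-(n:ℤ)) * ((qfact q k / qnum q k)⁻¹ * (qfact q (n-k))⁻¹))
        = (qnum q n)⁻¹ * ((qfact q k)⁻¹ * (qfact q (n-k))⁻¹)
          * (q^(k:ℤ) * qnum q (n-k) + q^((k:ℤ)-(n:ℤ)) * qnum q k) := by
      field_simp
    rw [key, hsplit]
    field_simp
  · -- k = n
    have hkeq : k = n := by omega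
    subst hkeq
    rw [if_neg (by omega), if_neg (by omega), if_pos (by omega),
      show k-1-(k-1) = 0 by omega, show k - k = 0 by omega, sub_self, zpow_zero]
    rw [hfn k hk1]
    simp only [qfact, Finset.range_zero, Finset.prod_empty]
    rw [mul_inv]
    field_simp
    ring

include hq0 hq1 in
lemma gauss_sum (n : ℕ) (hn : 1 ≤ n) :
    ∑ k ∈ Finset.range (n+1),
      (-1:𝔽)^k * q^((k:ℤ)*((n:ℤ)-1)) * ((qfact q k)⁻¹ * (qfact q (n-k))⁻¹) = 0 := by
  set T : ℕ → 𝔽 := fun k => if k < n then (qfact q k)⁻¹ * (qfact q (n-1-k))⁻¹ else 0 with hT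
  have step : ∀ k ∈ Finset.range (n+1),
      (-1:𝔽)^k * q^((k:ℤ)*((n:ℤ)-1)) * ((qfact q k)⁻¹ * (qfact q (n-k))⁻¹)
      = ((-1:𝔽)^k * q^((k:ℤ)*((n:ℤ)-1)) * ((qnum q n)⁻¹ * (q ^ (k:ℤ) * T k)))
        + ((-1:𝔽)^k * q^((k:ℤ)*((n:ℤ)-1)) * ((qnum q n)⁻¹ *
            (q ^ ((k:ℤ)-(n:ℤ)) * (if k = 0 then 0 else T (k-1))))) := by
    intro k hk
    rw [Finset.mem_range] at hk
    rw [gauss_pascal q hq0 hq1 n hn k (by omega)]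
    simp only [hT]
    ring
  rw [Finset.sum_congr rfl step, Finset.sum_add_distrib]
  have eA : ∑ k ∈ Finset.range (n+1),
      ((-1:𝔽)^k * q^((k:ℤ)*((n:ℤ)-1)) * ((qnum q n)⁻¹ * (q ^ (k:ℤ) * T k)))
      = ∑ k ∈ Finset.range n,
      ((-1:𝔽)^k * q^((k:ℤ)*((n:ℤ)-1)) * ((qnum q n)⁻¹ * (q ^ (k:ℤ) * T k))) := by
    rw [Finset.sum_range_succ, hT]
    simp
  have eB : ∑ k ∈ Finset.range (n+1),
      ((-1:𝔽)^k * q^((k:ℤ)*((n:ℤ)-1)) * ((qnum q n)⁻¹ *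
        (q ^ ((k:ℤ)-(n:ℤ)) * (if k = 0 then 0 else T (k-1)))))
      = ∑ k ∈ Finset.range n,
      ((-1:𝔽)^(k+1) * q^(((k:ℤ)+1)*((n:ℤ)-1)) * ((qnum q n)⁻¹ *
        (q ^ (((k:ℤ)+1)-(n:ℤ)) * T k))) := by
    rw [Finset.sum_range_succ']
    simp only [if_neg (Nat.succ_ne_zero _), if_pos rfl, Nat.add_sub_cancel]
    push_cast
    simp
  rw [eA, eB, ← Finset.sum_add_distrib]
  refine Finset.sum_eq_zero fun k hk => ?_
  have c1 : q^((k:ℤ)*((n:ℤ)-1)) * q ^ (k:ℤ) = q ^ ((k:ℤ)*(n:ℤ)) := by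
    rw [← zpow_add₀ hq0] ; congr 1 ; ring
  have c2 : q^(((k:ℤ)+1)*((n:ℤ)-1)) * q ^ (((k:ℤ)+1)-(n:ℤ)) = q ^ ((k:ℤ)*(n:ℤ)) := by
    rw [← zpow_add₀ hq0] ; congr 1 ; ring
  calc ((-1:𝔽)^k * q^((k:ℤ)*((n:ℤ)-1)) * ((qnum q n)⁻¹ * (q ^ (k:ℤ) * T k)))
      + ((-1:𝔽)^(k+1) * q^(((k:ℤ)+1)*((n:ℤ)-1)) * ((qnum q n)⁻¹ *
        (q ^ (((k:ℤ)+1)-(n:ℤ)) * T k)))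
      = ((-1:𝔽)^k * (q^((k:ℤ)*((n:ℤ)-1)) * q ^ (k:ℤ)) -
         (-1:𝔽)^k * (q^(((k:ℤ)+1)*((n:ℤ)-1)) * q ^ (((k:ℤ)+1)-(n:ℤ))))
          * ((qnum q n)⁻¹ * T k) := by ring
    _ = 0 := by rw [c1, c2] ; ring
end gauss

section trans
variable [CharZero 𝔽] (v : 𝔽) (hv : Transcendental ℚ v)

include hv in
lemma trans_ne_zero : v ≠ 0 := by
  intro h
  exact hv (h ▸ isAlgebraic_zero)

include hv in
lemma trans_npow_ne_one (n : ℕ) (hn : 1 ≤ n) : v ^ n ≠ 1 := by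
  intro h
  refine hv ⟨Polynomial.X ^ n - 1, ?_, ?_⟩
  · intro h0
    have h1 : (Polynomial.X ^ n - 1 : Polynomial ℚ).coeff n = 0 := by rw [h0]; simp
    rw [Polynomial.coeff_sub, Polynomial.coeff_X_pow, Polynomial.coeff_one,
      if_pos rfl, if_neg (by omega : ¬ n = 0)] at h1
    norm_num at h1
  · simp [h]

include hv in
lemma trans_zpow_ne_one (N : ℤ) (hN : N ≠ 0) : v ^ N ≠ 1 := by
  have h0 := trans_ne_zero v hv
  rcases lt_or_gt_of_ne hN with h | h
  · intro he
    have : (v ^ (-N).toNat)⁻¹ = 1 := by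
      rw [← zpow_natCast, Int.toNat_of_nonneg (by omega), ← zpow_neg, neg_neg, he]
    rw [inv_eq_one] at this
    exact trans_npow_ne_one v hv (-N).toNat (by omega) this
  · intro he
    rw [show N = (N.toNat : ℤ) by omega, zpow_natCast] at he
    exact trans_npow_ne_one v hv N.toNat (by omega) he

end trans


namespace SerreAux

set_option linter.unusedSectionVars false

variable {I : Type} [DecidableEq I] {𝔽 : Type} [Field 𝔽]

instance : DecidableEq (FreeMonoid I) := inferInstanceAs (DecidableEq (List I))

lemma mf_zero_left (β : MultForm I 𝔽) (μ : I →₀ ℕ) : β.f 0 μ = 1 := by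
  have h := β.add_left 0 0 μ
  rw [add_zero] at h
  have hne := β.ne_zero 0 μ
  have h2 : β.f 0 μ * 1 = β.f 0 μ * β.f 0 μ := by rw [mul_one, ← h]
  exact (mul_left_cancel₀ hne h2).symm

lemma mf_zero_right (β : MultForm I 𝔽) (μ : I →₀ ℕ) : β.f μ 0 = 1 := by
  have h := β.add_right μ 0 0
  rw [add_zero] at h
  have hne := β.ne_zero μ 0
  have h2 : β.f μ 0 * 1 = β.f μ 0 * β.f μ 0 := by rw [mul_one, ← h]
  exact (mul_left_cancel₀ hne h2).symm

lemma mf_single_pow (β : MultForm I 𝔽) (i : I) (k : ℕ) (μ : I →₀ ℕ) :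
    β.f (k • δN i) μ = (β.f (δN i) μ) ^ k := by
  induction k with
  | zero => simpa using mf_zero_left β μ
  | succ k ih =>
      rw [succ_nsmul, β.add_left, ih, pow_succ]

lemma wt_one : wt (1 : FreeMonoid I) = 0 := by
  simp [wt, show FreeMonoid.toList (1 : FreeMonoid I) = [] from rfl]

lemma wt_of (m : I) : wt (FreeMonoid.of m) = δN m := by
  simp [wt, FreeMonoid.toList_of, δN]

lemma wt_mul (w u : FreeMonoid I) : wt (w * u) = wt w + wt u := by
  simp only [wt, FreeMonoid.toList_mul, ← Multiset.coe_add, Multiset.toFinsupp_add]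

lemma dotN_zero_left (cd : CartanDatum I) (ν : I →₀ ℕ) : cd.dotN 0 ν = 0 := by
  simp [CartanDatum.dotN]

lemma dotN_zero_right (cd : CartanDatum I) (ν : I →₀ ℕ) : cd.dotN ν 0 = 0 := by
  simp [CartanDatum.dotN]

lemma dotN_single (cd : CartanDatum I) (m m' : I) :
    cd.dotN (δN m) (δN m') = cd.c m m' := by
  simp [CartanDatum.dotN, δN, Finsupp.sum_single_index]

/-- words -/
def wrd (𝔽 : Type) [Field 𝔽] (l : List I) : FA 𝔽 I :=
  MonoidAlgebra.single (FreeMonoid.ofList l) 1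

lemma θ_eq (m : I) : θ 𝔽 m = MonoidAlgebra.single (FreeMonoid.of m) 1 := rfl

lemma wrd_nil : wrd 𝔽 ([] : List I) = 1 := (MonoidAlgebra.one_def).symm

lemma wrd_cons (m : I) (l : List I) : θ 𝔽 m * wrd 𝔽 l = wrd 𝔽 (m :: l) := by
  rw [θ_eq, wrd, wrd, MonoidAlgebra.single_mul_single, one_mul, ← FreeMonoid.ofList_cons]

/-- slice map -/
def slh (w0 : FreeMonoid I) : TA 𝔽 I →+ FA 𝔽 I :=
  ((MonoidAlgebra.coeffAddEquiv : FA 𝔽 I ≃+ (FreeMonoid I →₀ 𝔽)).symm.toAddMonoidHom).comp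
    ((Finsupp.comapDomain.addMonoidHom (f := fun u => (w0, u))
      (fun u u' h => (Prod.ext_iff.mp h).2)).comp
      (MonoidAlgebra.coeffAddEquiv : TA 𝔽 I ≃+ ((FreeMonoid I × FreeMonoid I) →₀ 𝔽)).toAddMonoidHom)

lemma slh_apply (w0 : FreeMonoid I) (z : TA 𝔽 I)
    (u : FreeMonoid I) : (slh w0 z).coeff u = z.coeff (w0, u) := rfl

lemma slh_single (w0 x y : FreeMonoid I) (a : 𝔽) :
    slh w0 (MonoidAlgebra.single (x, y) a) = if x = w0 then MonoidAlgebra.single y a else 0 := by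
  ext u
  rw [slh_apply, MonoidAlgebra.coeff_single, Finsupp.single_apply]
  by_cases hx : x = w0 <;> by_cases hy : y = u <;>
    simp [hx, hy, Prod.ext_iff, Finsupp.single_apply]

lemma slh_sum (w0 : FreeMonoid I) (z : TA 𝔽 I) :
    slh w0 z = Finsupp.sum z.coeff fun q b => if q.1 = w0 then MonoidAlgebra.single q.2 b else 0 := by
  conv_lhs => rw [← MonoidAlgebra.sum_coeff_single z, map_finsuppSum]
  refine Finsupp.sum_congr fun q _ => ?_
  rw [show q = (q.1, q.2) from rfl, slh_single]

end SerreAux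


namespace SerreAux

set_option linter.unusedSectionVars false

variable {I : Type} [DecidableEq I] {𝔽 : Type} [Field 𝔽]
variable (cd : CartanDatum I) (v : 𝔽) (β : MultForm I 𝔽)

lemma of_mul_eq_of {m m' : I} {x : FreeMonoid I} :
    FreeMonoid.of m' * x = FreeMonoid.of m ↔ (m' = m ∧ x = 1) := by
  constructor
  · intro h
    have h' := congrArg FreeMonoid.toList h
    rw [FreeMonoid.toList_mul, FreeMonoid.toList_of, FreeMonoid.toList_of] at h'
    simp only [List.cons_append, List.nil_append, List.cons.injEq] at h'
    refine ⟨h'.1, ?_⟩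
    have := congrArg FreeMonoid.ofList (h'.2)
    rwa [FreeMonoid.ofList_toList] at this
  · rintro ⟨rfl, rfl⟩
    exact mul_one _

lemma of_mul_ne_one (m' : I) (x : FreeMonoid I) : FreeMonoid.of m' * x ≠ 1 := by
  intro h
  have h' := congrArg FreeMonoid.toList h
  rw [FreeMonoid.toList_mul, FreeMonoid.toList_of] at h'
  simp at h'

noncomputable def toFA : FA 𝔽 I → FA 𝔽 I := fun x => x

lemma slh_smul (w0 : FreeMonoid I) (c : 𝔽) (z : TA 𝔽 I) :
    slh w0 (c • z) = c • slh w0 z := by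
  ext u
  rfl

lemma tmul_single (w u : FreeMonoid I) (a b : 𝔽) :
    tmul (MonoidAlgebra.single w a) (MonoidAlgebra.single u b)
      = (MonoidAlgebra.single (w, u) (a*b) : TA 𝔽 I) := by
  unfold tmul
  rw [MonoidAlgebra.coeff_single, MonoidAlgebra.coeff_single, Finsupp.sum_single_index,
    Finsupp.sum_single_index]
  · rfl
  all_goals simp [Finsupp.sum_single_index]

lemma tMul_single_left (p : FreeMonoid I × FreeMonoid I) (a : 𝔽) (z : TA 𝔽 I) :
    tMul cd v β (MonoidAlgebra.single p a) z
      = Finsupp.sum z.coeff fun q b => MonoidAlgebra.single (p.1*q.1, p.2*q.2)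
          (a * b * v^(-(cd.dotN (wt q.1) (wt p.2))) * β.f (wt p.2) (wt q.1)) := by
  unfold tMul
  rw [MonoidAlgebra.coeff_single]
  exact Finsupp.sum_single_index (by simp)

lemma tMul_add_left (z1 z2 z : TA 𝔽 I) :
    tMul cd v β (z1 + z2) z = tMul cd v β z1 z + tMul cd v β z2 z := by
  unfold tMul
  rw [MonoidAlgebra.coeff_add]
  exact Finsupp.sum_add_index' (by simp) (by
    intro p b1 b2
    rw [← Finsupp.sum_add]
    refine Finsupp.sum_congr fun q _ => ?_
    rw [MonoidAlgebra.ofCoeff_single, MonoidAlgebra.ofCoeff_single, MonoidAlgebra.ofCoeff_single,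
      ← MonoidAlgebra.single_add]
    congr 1
    ring)

lemma masterA (m' : I) (z : TA 𝔽 I) :
    tMul cd v β (MonoidAlgebra.single ((FreeMonoid.of m', 1)) (1:𝔽)) z
      = Finsupp.sum z.coeff fun q b => MonoidAlgebra.single (FreeMonoid.of m' * q.1, q.2) b := by
  rw [tMul_single_left]
  refine Finsupp.sum_congr fun q _ => ?_
  simp [wt_one, dotN_zero_right, mf_zero_left]

lemma masterB (m' : I) (z : TA 𝔽 I) :
    tMul cd v β (MonoidAlgebra.single (((1:FreeMonoid I), FreeMonoid.of m')) (1:𝔽)) z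
      = Finsupp.sum z.coeff fun q b => MonoidAlgebra.single (q.1, FreeMonoid.of m' * q.2)
          (b * (v^(-(cd.dotN (wt q.1) (δN m'))) * β.f (δN m') (wt q.1))) := by
  rw [tMul_single_left]
  refine Finsupp.sum_congr fun q _ => ?_
  simp [wt_of, mul_assoc]

lemma theta_mul_slh (m' : I) (w0 : FreeMonoid I) (z : TA 𝔽 I) :
    θ 𝔽 m' * toFA (slh w0 z)
      = toFA (Finsupp.sum z.coeff fun q b =>
          if q.1 = w0 then MonoidAlgebra.single (FreeMonoid.of m' * q.2) b else 0) := by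
  rw [toFA, slh_sum, θ_eq]
  rw [toFA, Finsupp.mul_sum]
  refine Finsupp.sum_congr fun q _ => ?_
  rw [mul_ite, mul_zero]
  by_cases h : q.1 = w0 <;> simp [h, MonoidAlgebra.single_mul_single]

lemma slA (m m' : I) (z : TA 𝔽 I) :
    slh (FreeMonoid.of m) (tMul cd v β (MonoidAlgebra.single ((FreeMonoid.of m', 1)) (1:𝔽)) z)
      = if m' = m then slh 1 z else 0 := by
  rw [masterA, map_finsuppSum]
  by_cases hm : m' = m
  · subst hm
    rw [if_pos rfl, slh_sum]
    refine Finsupp.sum_congr fun q _ => ?_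
    rw [slh_single, if_congr (show (FreeMonoid.of m' * q.1 = FreeMonoid.of m') ↔ q.1 = 1
      from of_mul_eq_of.trans (by simp)) rfl rfl]
  · rw [if_neg hm]
    refine (Finsupp.sum_congr fun q _ => ?_).trans (show (z.coeff.sum fun _ _ => (0 : FA 𝔽 I)) = 0 by simp [Finsupp.sum])
    rw [slh_single, if_neg]
    intro h
    exact hm (of_mul_eq_of.mp h).1

lemma slB (m m' : I) (z : TA 𝔽 I) :
    slh (FreeMonoid.of m) (tMul cd v β (MonoidAlgebra.single (((1:FreeMonoid I), FreeMonoid.of m')) (1:𝔽)) z)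
      = (v^(-(cd.c m m')) * β.f (δN m') (δN m)) •
          (θ 𝔽 m' * toFA (slh (FreeMonoid.of m) z)) := by
  rw [masterB, map_finsuppSum, theta_mul_slh, toFA, Finsupp.smul_sum]
  refine Finsupp.sum_congr fun q _ => ?_
  rw [slh_single]
  by_cases h : q.1 = FreeMonoid.of m
  · rw [if_pos h, if_pos h, h, wt_of, dotN_single, MonoidAlgebra.smul_single, smul_eq_mul]
    congr 1
    ring
  · rw [if_neg h, if_neg h, smul_zero]

lemma slC (m' : I) (z : TA 𝔽 I) :
    slh 1 (tMul cd v β (MonoidAlgebra.single ((FreeMonoid.of m', 1)) (1:𝔽)) z) = 0 := by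
  rw [masterA, map_finsuppSum]
  refine (Finsupp.sum_congr fun q _ => ?_).trans (show (z.coeff.sum fun _ _ => (0 : FA 𝔽 I)) = 0 by simp [Finsupp.sum])
  rw [slh_single, if_neg (of_mul_ne_one m' q.1)]

lemma slD (m' : I) (z : TA 𝔽 I) :
    slh 1 (tMul cd v β (MonoidAlgebra.single (((1:FreeMonoid I), FreeMonoid.of m')) (1:𝔽)) z)
      = θ 𝔽 m' * toFA (slh 1 z) := by
  rw [masterB, map_finsuppSum, theta_mul_slh, toFA]
  refine Finsupp.sum_congr fun q _ => ?_
  rw [slh_single]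
  by_cases h : q.1 = (1 : FreeMonoid I)
  · rw [if_pos h, if_pos h, h, wt_one, dotN_zero_left, mf_zero_right]
    simp
  · rw [if_neg h, if_neg h]

end SerreAux


namespace SerreAux

set_option linter.unusedSectionVars false

variable {I : Type} [DecidableEq I] {𝔽 : Type} [Field 𝔽]
variable (cd : CartanDatum I) (v : 𝔽) (β : MultForm I 𝔽)
variable (r : FA 𝔽 I →ₗ[𝔽] TA 𝔽 I)
variable (hr1 : r 1 = tmul 1 1)
variable (hrθ : ∀ i : I, r (θ 𝔽 i) = tmul (θ 𝔽 i) 1 + tmul 1 (θ 𝔽 i))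
variable (hrm : ∀ x y : FA 𝔽 I, r (x * y) = tMul cd v β (r x) (r y))

/-- geometric sum -/
def Sgeo (q : 𝔽) (k : ℕ) : 𝔽 := ∑ s ∈ Finset.range k, q ^ (-(2:ℤ) * s)

lemma Sgeo_zero (q : 𝔽) : Sgeo q 0 = 0 := by simp [Sgeo]

lemma Sgeo_one (q : 𝔽) : Sgeo q 1 = 1 := by simp [Sgeo]

lemma Sgeo_succ' (q : 𝔽) (hq0 : q ≠ 0) (k : ℕ) :
    Sgeo q (k+1) = 1 + q^(-(2:ℤ)) * Sgeo q k := by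
  rw [Sgeo, Finset.sum_range_succ']
  simp only [Nat.cast_zero, mul_zero, zpow_zero]
  rw [add_comm, Sgeo, Finset.mul_sum]
  congr 1
  refine Finset.sum_congr rfl fun s _ => ?_
  rw [← zpow_add₀ hq0]
  congr 1
  push_cast ; ring

lemma wrd_append (l1 l2 : List I) : wrd 𝔽 l1 * wrd 𝔽 l2 = wrd 𝔽 (l1 ++ l2) := by
  rw [wrd, wrd, wrd, MonoidAlgebra.single_mul_single, one_mul, FreeMonoid.ofList_append]

lemma theta_pow (m : I) (k : ℕ) : θ 𝔽 m ^ k = wrd 𝔽 (List.replicate k m) := by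
  induction k with
  | zero => rw [pow_zero, List.replicate_zero, wrd_nil]
  | succ k ih =>
      rw [pow_succ, ih, show θ 𝔽 m = wrd 𝔽 [m] from rfl, wrd_append,
        ← List.replicate_succ' (n := k) (a := m)]

section scalars2
variable (q : 𝔽) (hq0 : q ≠ 0) (hq1 : ∀ N : ℤ, N ≠ 0 → q ^ N ≠ 1)

include hq0 hq1 in
lemma qnum_one' : qnum q 1 = 1 := by
  have hd := qden_ne q hq0 hq1
  rw [qnum]
  push_cast
  rw [zpow_one, zpow_neg, zpow_one, div_self hd]

include hq0 hq1 in
lemma qnum_succ' (m : ℕ) : qnum q (m+1) = q * qnum q m + q ^ (-(m:ℤ)) := by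
  have h := qnum_split q hq0 1 (m+1) (by omega)
  rw [qnum_one' q hq0 hq1, mul_one] at h
  rw [← h, Nat.add_sub_cancel]
  push_cast
  rw [zpow_one]
  congr 2
  ring

include hq0 hq1 in
lemma Sgeo_eq (m : ℕ) : Sgeo q (m+1) = q^(-(m:ℤ)) * qnum q (m+1) := by
  induction m with
  | zero => simp [Sgeo_one, qnum_one' q hq0 hq1]
  | succ m ih =>
      rw [show Sgeo q (m+1+1) = Sgeo q (m+1) + q^(-(2:ℤ)*(m+1:ℕ)) from
        Finset.sum_range_succ _ _, ih, qnum_succ' q hq0 hq1 (m+1), mul_add]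
      have e1 : q ^ (-((m+1:ℕ):ℤ)) * q = q ^ (-(m:ℤ)) := by
        nth_rewrite 2 [← zpow_one q]
        rw [← zpow_add₀ hq0]
        congr 1
        push_cast ; ring
      have e2 : q ^ (-((m+1:ℕ):ℤ)) * q ^ (-((m+1:ℕ):ℤ)) = q ^ (-(2:ℤ)*((m+1:ℕ):ℤ)) := by
        rw [← zpow_add₀ hq0] ; congr 1 ; ring
      calc q ^ (-(m:ℤ)) * qnum q (m+1) + q ^ (-(2:ℤ)*((m+1:ℕ):ℤ))
          = (q ^ (-((m+1:ℕ):ℤ)) * q) * qnum q (m+1)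
            + q ^ (-((m+1:ℕ):ℤ)) * q ^ (-((m+1:ℕ):ℤ)) := by rw [e1, e2]
        _ = q ^ (-((m+1:ℕ):ℤ)) * (q * qnum q (m+1))
            + q ^ (-((m+1:ℕ):ℤ)) * q ^ (-((m+1:ℕ):ℤ)) := by ring

include hq0 hq1 in
lemma gammaS (m : ℕ) :
    (qfact q (m+1))⁻¹ * Sgeo q (m+1) = q^(-(m:ℤ)) * (qfact q m)⁻¹ := by
  rw [Sgeo_eq q hq0 hq1, qfact_succ, mul_inv]
  have hne := qnum_ne q hq0 hq1 (m+1) (by omega)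
  calc (qfact q m)⁻¹ * (qnum q (m+1))⁻¹ * (q ^ (-(m:ℤ)) * qnum q (m+1))
      = q ^ (-(m:ℤ)) * (qfact q m)⁻¹ * ((qnum q (m+1))⁻¹ * qnum q (m+1)) := by ring
    _ = q ^ (-(m:ℤ)) * (qfact q m)⁻¹ := by rw [inv_mul_cancel₀ hne, mul_one]

end scalars2

section cartan
variable (i j : I)

lemma cii_eq : cd.c i i = 2 * cd.d i := by
  obtain ⟨d', hd'⟩ := cd.even i
  have h : cd.d i = d' := by
    rw [CartanDatum.d, hd'] ; omega
  omega

lemma a_nonpos (hij : i ≠ j) : cd.a i j ≤ 0 := by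
  have h := Int.ediv_le_ediv (cd.pos i) (cd.nonpos i j hij)
  rwa [Int.zero_ediv] at h

lemma cij_eq (hij : i ≠ j) : cd.c i j = cd.d i * cd.a i j := by
  obtain ⟨d', hd'⟩ := cd.even i
  have hd : cd.d i = d' := by rw [CartanDatum.d, hd'] ; omega
  obtain ⟨t, ht⟩ := cd.dvd i j hij
  have hcpos := cd.pos i
  have ha : cd.a i j = t := by
    rw [CartanDatum.a, ht, Int.mul_ediv_cancel_left _ (by omega)]
  have h2 : 2 * cd.c i j = 2 * (d' * t) := by
    rw [ht, hd'] ; ring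
  have h3 : cd.c i j = d' * t := by omega
  rw [h3, hd, ha]

lemma d_pos : 1 ≤ cd.d i := by
  obtain ⟨d', hd'⟩ := cd.even i
  have h : cd.d i = d' := by rw [CartanDatum.d, hd'] ; omega
  have := cd.pos i
  omega

end cartan

end SerreAux


namespace SerreAux

set_option linter.unusedSectionVars false

variable {I : Type} [DecidableEq I] {𝔽 : Type} [Field 𝔽]
variable (cd : CartanDatum I) (v : 𝔽) (β : MultForm I 𝔽)
variable (r : FA 𝔽 I →ₗ[𝔽] TA 𝔽 I)
variable (hr1 : r 1 = tmul 1 1)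
variable (hrθ : ∀ i : I, r (θ 𝔽 i) = tmul (θ 𝔽 i) 1 + tmul 1 (θ 𝔽 i))
variable (hrm : ∀ x y : FA 𝔽 I, r (x * y) = tMul cd v β (r x) (r y))

lemma one_ne_of (m : I) : (1 : FreeMonoid I) ≠ FreeMonoid.of m := by
  intro h
  have h' := congrArg FreeMonoid.toList h
  rw [FreeMonoid.toList_of] at h'
  simp [show FreeMonoid.toList (1 : FreeMonoid I) = [] from rfl] at h'

lemma toFA_smul (c : 𝔽) (x : FA 𝔽 I) : toFA (c • x) = c • toFA x := rfl

lemma toFA_add (x y : FA 𝔽 I) : toFA (x + y) = toFA x + toFA y := rfl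

include hrθ hrm in
lemma r_theta_mul (m' : I) (y : FA 𝔽 I) :
    r (θ 𝔽 m' * y)
      = tMul cd v β (MonoidAlgebra.single ((FreeMonoid.of m', (1:FreeMonoid I))) (1:𝔽)) (r y)
      + tMul cd v β (MonoidAlgebra.single (((1:FreeMonoid I), FreeMonoid.of m')) (1:𝔽)) (r y) := by
  rw [hrm, hrθ, tMul_add_left]
  congr 2
  · rw [θ_eq, MonoidAlgebra.one_def, tmul_single, one_mul]
  · rw [θ_eq, MonoidAlgebra.one_def, tmul_single, one_mul]

include hr1 in
lemma counit_one : slh 1 (r (1 : FA 𝔽 I)) = MonoidAlgebra.single (1 : FreeMonoid I) (1:𝔽) := by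
  rw [hr1, show (1 : FA 𝔽 I) = MonoidAlgebra.single 1 1 from MonoidAlgebra.one_def,
    tmul_single, slh_single, if_pos rfl, one_mul]

include hr1 hrθ hrm in
lemma counit_wrd (l : List I) : slh 1 (r (wrd 𝔽 l)) = wrd 𝔽 l := by
  induction l with
  | nil =>
      rw [wrd_nil, counit_one (r := r) (hr1 := hr1)]
      exact MonoidAlgebra.one_def.symm
  | cons m l ih =>
      rw [← wrd_cons, r_theta_mul (cd := cd) (v := v) (β := β) (r := r) (hrθ := hrθ) (hrm := hrm), map_add, slC, slD, zero_add, ih,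
        show toFA (wrd 𝔽 l : FA 𝔽 I) = wrd 𝔽 l from rfl, wrd_cons]

include hr1 in
lemma rsl_one (m : I) : slh (FreeMonoid.of m) (r (1 : FA 𝔽 I)) = 0 := by
  rw [hr1, show (1 : FA 𝔽 I) = MonoidAlgebra.single 1 1 from MonoidAlgebra.one_def,
    tmul_single, slh_single, if_neg (one_ne_of m)]

include hrθ hrm in
lemma rsl_step (m m' : I) (y : FA 𝔽 I) :
    slh (FreeMonoid.of m) (r (θ 𝔽 m' * y))
      = toFA (if m' = m then slh 1 (r y) else 0)
        + (v^(-(cd.c m m')) * β.f (δN m') (δN m)) •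
            (θ 𝔽 m' * toFA (slh (FreeMonoid.of m) (r y))) := by
  rw [r_theta_mul (cd := cd) (v := v) (β := β) (r := r) (hrθ := hrθ) (hrm := hrm),
    map_add, slA, slB]
  rfl

include hr1 hrθ hrm in
lemma rsl_notin (m : I) (l : List I) (hm : m ∉ l) :
    slh (FreeMonoid.of m) (r (wrd 𝔽 l)) = 0 := by
  induction l with
  | nil => rw [wrd_nil] ; exact rsl_one (r := r) (hr1 := hr1) m
  | cons m' l ih =>
      rw [← wrd_cons, rsl_step (cd := cd) (v := v) (β := β) (r := r) (hrθ := hrθ) (hrm := hrm),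
        if_neg (by intro h ; exact hm (h ▸ List.mem_cons_self (a := m') (l := l))),
        ih (fun h => hm (List.mem_cons_of_mem m' h)),
        show toFA (0 : FA 𝔽 I) = 0 from rfl, mul_zero, smul_zero, zero_add]

section words
variable (i j : I) (hij : i ≠ j)
variable (hv0 : v ≠ 0) (hv1 : ∀ N : ℤ, N ≠ 0 → v ^ N ≠ 1)
variable (hβii : β.f (δN i) (δN i) = 1)

include hv0 in
lemma hq0' : (v ^ cd.d i) ≠ 0 := zpow_ne_zero _ hv0

include hv0 hv1 in
lemma hq1' : ∀ N : ℤ, N ≠ 0 → (v ^ cd.d i) ^ N ≠ 1 := by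
  intro N hN
  rw [← zpow_mul]
  refine hv1 _ ?_
  have := d_pos cd i
  intro h
  rcases Int.mul_eq_zero.mp h with h | h <;> omega

lemma cii_zpow : v ^ (-(cd.c i i)) = (v ^ cd.d i) ^ (-(2:ℤ)) := by
  rw [cii_eq cd i, show -(2 * cd.d i) = cd.d i * (-2) by ring, zpow_mul]

include hv0 in
lemma collect (k : ℕ) (t : List I) :
    wrd 𝔽 (List.replicate k i ++ t)
      + ((v ^ cd.d i) ^ (-(2:ℤ)) * Sgeo (v ^ cd.d i) k) •
          (θ 𝔽 i * toFA (wrd 𝔽 (List.replicate (k-1) i ++ t)))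
      = Sgeo (v ^ cd.d i) (k+1) • wrd 𝔽 (List.replicate k i ++ t) := by
  rw [Sgeo_succ' _ (hq0' (cd := cd) (v := v) (i := i) hv0), add_smul, one_smul]
  congr 1
  cases k with
  | zero => rw [Sgeo_zero, mul_zero, zero_smul, zero_smul]
  | succ k =>
      congr 1
      rw [show toFA (wrd 𝔽 (List.replicate (k+1-1) i ++ t) : FA 𝔽 I)
          = wrd 𝔽 (List.replicate k i ++ t) from rfl, wrd_cons,
        List.replicate_succ, List.cons_append]

include hr1 hrθ hrm hβii hv0 in
lemma rsl_rep (k : ℕ) :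
    slh (FreeMonoid.of i) (r (wrd 𝔽 (List.replicate k i)))
      = Sgeo (v ^ cd.d i) k • wrd 𝔽 (List.replicate (k-1) i) := by
  induction k with
  | zero => rw [List.replicate_zero, wrd_nil, Sgeo_zero, zero_smul] ; exact rsl_one (r := r) (hr1 := hr1) i
  | succ k ih =>
      rw [List.replicate_succ, ← wrd_cons,
        rsl_step (cd := cd) (v := v) (β := β) (r := r) (hrθ := hrθ) (hrm := hrm), if_pos rfl,
        counit_wrd (cd := cd) (v := v) (β := β) (r := r) (hr1 := hr1) (hrθ := hrθ) (hrm := hrm),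
        ih, hβii, mul_one, cii_zpow (cd := cd) (v := v) (i := i),
        toFA_smul, mul_smul_comm, smul_smul, Nat.add_sub_cancel]
      have := collect (cd := cd) (v := v) (i := i) (hv0 := hv0) k (([]) : List I)
      rw [List.append_nil, List.append_nil] at this
      exact this


include hr1 hrθ hrm hij in
lemma rsl_j_word (k mm : ℕ) :
    slh (FreeMonoid.of j) (r (wrd 𝔽 (List.replicate k i ++ j :: List.replicate mm i)))
      = ((v ^ (-(cd.c j i)) * β.f (δN i) (δN j)) ^ k) • wrd 𝔽 (List.replicate (k+mm) i) := by
  induction k with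
  | zero =>
      simp only [List.replicate_zero, List.nil_append, Nat.zero_add, pow_zero, one_smul]
      rw [← wrd_cons, rsl_step (cd := cd) (v := v) (β := β) (r := r) (hrθ := hrθ) (hrm := hrm),
        if_pos rfl,
        counit_wrd (cd := cd) (v := v) (β := β) (r := r) (hr1 := hr1) (hrθ := hrθ) (hrm := hrm),
        rsl_notin (cd := cd) (v := v) (β := β) (r := r) (hr1 := hr1) (hrθ := hrθ) (hrm := hrm)
          j (List.replicate mm i) (by
            intro h
            exact hij (List.eq_of_mem_replicate h).symm),
        show toFA (0 : FA 𝔽 I) = 0 from rfl, mul_zero, smul_zero, add_zero]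
      rfl
  | succ k ih =>
      rw [List.replicate_succ, List.cons_append, ← wrd_cons,
        rsl_step (cd := cd) (v := v) (β := β) (r := r) (hrθ := hrθ) (hrm := hrm),
        if_neg hij, ih, show toFA (0 : FA 𝔽 I) = 0 from rfl, zero_add,
        toFA_smul, mul_smul_comm, smul_smul,
        show toFA (wrd 𝔽 (List.replicate (k+mm) i) : FA 𝔽 I)
          = wrd 𝔽 (List.replicate (k+mm) i) from rfl, wrd_cons,
        show (i :: List.replicate (k+mm) i) = List.replicate (k+1+mm) i from by
          rw [show k+1+mm = (k+mm)+1 by omega, List.replicate_succ],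
        ← pow_succ']


include hr1 hrθ hrm hij hβii hv0 in
lemma rsl_i_word (k mm : ℕ) :
    slh (FreeMonoid.of i) (r (wrd 𝔽 (List.replicate k i ++ j :: List.replicate mm i)))
      = Sgeo (v ^ cd.d i) k • wrd 𝔽 (List.replicate (k-1) i ++ j :: List.replicate mm i)
        + ((v ^ cd.d i) ^ (-(2:ℤ) * (k:ℕ)) * v ^ (-(cd.c i j)) * β.f (δN j) (δN i)
            * Sgeo (v ^ cd.d i) mm)
          • wrd 𝔽 (List.replicate k i ++ j :: List.replicate (mm-1) i) := by
  induction k with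
  | zero =>
      simp only [List.replicate_zero, List.nil_append, Sgeo_zero, zero_smul, zero_add,
        Nat.cast_zero, mul_zero, zpow_zero, one_mul]
      rw [← wrd_cons, rsl_step (cd := cd) (v := v) (β := β) (r := r) (hrθ := hrθ) (hrm := hrm),
        if_neg (fun h => hij h.symm), show toFA (0 : FA 𝔽 I) = 0 from rfl, zero_add,
        rsl_rep (cd := cd) (v := v) (β := β) (r := r) (hr1 := hr1) (hrθ := hrθ) (hrm := hrm)
          (i := i) (hβii := hβii) (hv0 := hv0) mm,
        toFA_smul, mul_smul_comm, smul_smul,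
        show toFA (wrd 𝔽 (List.replicate (mm-1) i) : FA 𝔽 I)
          = wrd 𝔽 (List.replicate (mm-1) i) from rfl, wrd_cons, mul_assoc]
  | succ k ih =>
      rw [List.replicate_succ, List.cons_append, ← wrd_cons,
        rsl_step (cd := cd) (v := v) (β := β) (r := r) (hrθ := hrθ) (hrm := hrm), if_pos rfl,
        counit_wrd (cd := cd) (v := v) (β := β) (r := r) (hr1 := hr1) (hrθ := hrθ) (hrm := hrm),
        ih, hβii, mul_one, cii_zpow (cd := cd) (v := v) (i := i),
        toFA_add, toFA_smul, toFA_smul, mul_add, mul_smul_comm, mul_smul_comm,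
        smul_add, smul_smul, smul_smul]
      have e1 := collect (cd := cd) (v := v) (i := i) (hv0 := hv0) k (j :: List.replicate mm i)
      have e2 : θ 𝔽 i * toFA (wrd 𝔽 (List.replicate k i ++ j :: List.replicate (mm-1) i))
          = wrd 𝔽 (List.replicate (k+1) i ++ j :: List.replicate (mm-1) i) := by
        rw [show toFA (wrd 𝔽 (List.replicate k i ++ j :: List.replicate (mm-1) i)
              : FA 𝔽 I)
            = wrd 𝔽 (List.replicate k i ++ j :: List.replicate (mm-1) i) from rfl, wrd_cons,
          List.replicate_succ, List.cons_append]
      have e3 : (v ^ cd.d i) ^ (-(2:ℤ)) * ((v ^ cd.d i) ^ (-(2:ℤ) * (k:ℕ))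
            * v ^ (-(cd.c i j)) * β.f (δN j) (δN i) * Sgeo (v ^ cd.d i) mm)
          = (v ^ cd.d i) ^ (-(2:ℤ) * ((k+1:ℕ):ℤ)) * v ^ (-(cd.c i j)) * β.f (δN j) (δN i)
            * Sgeo (v ^ cd.d i) mm := by
        rw [← mul_assoc, ← mul_assoc, ← mul_assoc, ← zpow_add₀ (hq0' (cd := cd) (v := v) (i := i) hv0)]
        congr 3
        push_cast ; ring
      rw [e2, e3, show toFA (wrd 𝔽 (List.replicate k i ++ j :: List.replicate mm i)
            : FA 𝔽 I)
          = wrd 𝔽 (List.replicate k i ++ j :: List.replicate mm i) from rfl,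
        Nat.add_sub_cancel, ← add_assoc, e1, List.replicate_succ, List.cons_append]

end words

end SerreAux


namespace SerreAux

set_option linter.unusedSectionVars false

variable {I : Type} [DecidableEq I] {𝔽 : Type} [Field 𝔽]
variable (cd : CartanDatum I) (v : 𝔽) (β : MultForm I 𝔽)
variable (r : FA 𝔽 I →ₗ[𝔽] TA 𝔽 I)
variable (hr1 : r 1 = tmul 1 1)
variable (hrθ : ∀ i : I, r (θ 𝔽 i) = tmul (θ 𝔽 i) 1 + tmul 1 (θ 𝔽 i))
variable (hrm : ∀ x y : FA 𝔽 I, r (x * y) = tMul cd v β (r x) (r y))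

lemma Dij_eq (i j : I) :
    Dij cd v (fun a b => β.f (δN a) (δN b)) i j
      = ∑ k ∈ Finset.range ((1 - cd.a i j).toNat + 1),
          ((-1:𝔽)^k * ((β.f (δN i) (δN j))⁻¹)^k
            * ((qfact (v ^ cd.d i) k)⁻¹ * (qfact (v ^ cd.d i) ((1 - cd.a i j).toNat - k))⁻¹))
            • wrd 𝔽 (List.replicate k i ++ j :: List.replicate ((1 - cd.a i j).toNat - k) i) := by
  unfold Dij θdiv
  refine Finset.sum_congr rfl fun k _ => ?_
  rw [theta_pow, theta_pow, smul_mul_assoc, smul_mul_assoc, mul_smul_comm, smul_smul, smul_smul,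
    show θ 𝔽 j = wrd 𝔽 [j] from rfl, wrd_append, wrd_append]
  congr 1
  · ring
  · congr 1
    rw [List.append_assoc]
    rfl

lemma rsl_sum (m : I) (s : Finset ℕ) (c : ℕ → 𝔽) (x : ℕ → FA 𝔽 I) :
    slh (FreeMonoid.of m) (r (∑ k ∈ s, c k • x k))
      = ∑ k ∈ s, c k • slh (FreeMonoid.of m) (r (x k)) := by
  rw [map_sum, map_sum]
  refine Finset.sum_congr rfl fun k _ => ?_
  rw [LinearMap.map_smul, slh_smul]

lemma coeff_cancel (q g2 : 𝔽) (hq0 : q ≠ 0) (hq1 : ∀ N : ℤ, N ≠ 0 → q ^ N ≠ 1)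
    (n k : ℕ) (hk : k < n) :
    ((-1:𝔽)^(k+1) * g2^(k+1) * ((qfact q (k+1))⁻¹ * (qfact q (n-(k+1)))⁻¹)) * Sgeo q (k+1)
      + ((-1:𝔽)^k * g2^k * ((qfact q k)⁻¹ * (qfact q (n-k))⁻¹)) *
          (q^(-(2:ℤ)*(k:ℕ)) * q^((n:ℤ)-1) * g2 * Sgeo q (n-k)) = 0 := by
  have h1 := gammaS q hq0 hq1 k
  have h2 : (qfact q (n-k))⁻¹ * Sgeo q (n-k)
      = q^(-((n-k-1:ℕ):ℤ)) * (qfact q (n-k-1))⁻¹ := by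
    rw [show n-k = n-k-1+1 by omega]
    exact gammaS q hq0 hq1 (n-k-1)
  have h3 : q^(-(2:ℤ)*(k:ℕ)) * q^((n:ℤ)-1) * q^(-((n-k-1:ℕ):ℤ)) = q^(-(k:ℤ)) := by
    rw [← zpow_add₀ hq0, ← zpow_add₀ hq0]
    congr 1
    have hc : ((n-k-1:ℕ):ℤ) = (n:ℤ)-(k:ℤ)-1 := by omega
    rw [hc] ; ring
  rw [show n-(k+1) = n-k-1 by omega]
  linear_combination ((-1:𝔽)^(k+1) * g2^(k+1) * (qfact q (n-k-1))⁻¹) * h1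
    + ((-1:𝔽)^k * g2^(k+1) * (qfact q k)⁻¹ * q^(-(2:ℤ)*(k:ℕ)) * q^((n:ℤ)-1)) * h2
    + ((-1:𝔽)^k * g2^(k+1) * (qfact q k)⁻¹ * (qfact q (n-k-1))⁻¹) * h3

include hr1 hrθ hrm in
lemma rsl_D (i j : I) (hij : i ≠ j) (hv0 : v ≠ 0) (hv1 : ∀ N : ℤ, N ≠ 0 → v ^ N ≠ 1)
    (hββ : β.f (δN i) (δN j) * β.f (δN j) (δN i) = 1)
    (hβii : β.f (δN i) (δN i) = 1) (m : I) :
    slh (FreeMonoid.of m) (r (Dij cd v (fun a b => β.f (δN a) (δN b)) i j)) = 0 := by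
  have hq0 : (v ^ cd.d i) ≠ 0 := hq0' (cd := cd) (v := v) (i := i) hv0
  have hq1 := hq1' (cd := cd) (v := v) (i := i) hv0 hv1
  have hanp := a_nonpos cd i j hij
  have hnZ : (((1 - cd.a i j).toNat : ℕ) : ℤ) = 1 - cd.a i j := by omega
  have hn1 : 1 ≤ (1 - cd.a i j).toNat := by omega
  have hcij : v ^ (-(cd.c i j)) = (v ^ cd.d i) ^ ((((1 - cd.a i j).toNat : ℕ):ℤ)-1) := by
    rw [cij_eq cd i j hij, show -(cd.d i * cd.a i j)
      = cd.d i * ((((1 - cd.a i j).toNat : ℕ):ℤ)-1) from by rw [hnZ] ; ring, zpow_mul]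
  have hcji : v ^ (-(cd.c j i)) = (v ^ cd.d i) ^ ((((1 - cd.a i j).toNat : ℕ):ℤ)-1) := by
    rw [cd.symm j i] ; exact hcij
  have hgne : β.f (δN i) (δN j) ≠ 0 := β.ne_zero _ _
  have hb : β.f (δN j) (δN i) = (β.f (δN i) (δN j))⁻¹ :=
    (inv_eq_of_mul_eq_one_right hββ).symm
  set n := (1 - cd.a i j).toNat with hn
  set q := v ^ cd.d i with hq
  set g := β.f (δN i) (δN j) with hg
  rw [Dij_eq, rsl_sum]
  by_cases hmi : m = i
  · subst hmi
    have step : ∀ k ∈ Finset.range (n+1),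
        ((-1:𝔽)^k * (g⁻¹)^k * ((qfact q k)⁻¹ * (qfact q (n-k))⁻¹)) •
            slh (FreeMonoid.of m) (r (wrd 𝔽 (List.replicate k m ++ j :: List.replicate (n-k) m)))
          = ((-1:𝔽)^k * (g⁻¹)^k * ((qfact q k)⁻¹ * (qfact q (n-k))⁻¹) * Sgeo q k) •
              wrd 𝔽 (List.replicate (k-1) m ++ j :: List.replicate (n-k) m)
            + ((-1:𝔽)^k * (g⁻¹)^k * ((qfact q k)⁻¹ * (qfact q (n-k))⁻¹) *
                (q ^ (-(2:ℤ)*(k:ℕ)) * q ^ (((n:ℕ):ℤ)-1) * g⁻¹ * Sgeo q (n-k))) •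
              wrd 𝔽 (List.replicate k m ++ j :: List.replicate (n-k-1) m) := by
      intro k _
      rw [rsl_i_word (cd := cd) (v := v) (β := β) (r := r) (hr1 := hr1) (hrθ := hrθ)
          (hrm := hrm) (i := m) (j := j) (hij := hij) (hv0 := hv0) (hβii := hβii) k (n-k),
        hcij, hb, smul_add, smul_smul, smul_smul, Nat.sub_sub]
    rw [Finset.sum_congr rfl step, Finset.sum_add_distrib]
    have eA : ∑ k ∈ Finset.range (n+1),
        ((-1:𝔽)^k * (g⁻¹)^k * ((qfact q k)⁻¹ * (qfact q (n-k))⁻¹) * Sgeo q k) •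
            wrd 𝔽 (List.replicate (k-1) m ++ j :: List.replicate (n-k) m)
        = ∑ k ∈ Finset.range n,
        ((-1:𝔽)^(k+1) * (g⁻¹)^(k+1) * ((qfact q (k+1))⁻¹ * (qfact q (n-(k+1)))⁻¹) * Sgeo q (k+1)) •
            wrd 𝔽 (List.replicate k m ++ j :: List.replicate (n-(k+1)) m) := by
      rw [Finset.sum_range_succ']
      simp only [Sgeo_zero, mul_zero, zero_smul, add_zero, Nat.add_sub_cancel]
    have eB : ∑ k ∈ Finset.range (n+1),
        ((-1:𝔽)^k * (g⁻¹)^k * ((qfact q k)⁻¹ * (qfact q (n-k))⁻¹) *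
            (q ^ (-(2:ℤ)*(k:ℕ)) * q ^ (((n:ℕ):ℤ)-1) * g⁻¹ * Sgeo q (n-k))) •
            wrd 𝔽 (List.replicate k m ++ j :: List.replicate (n-k-1) m)
        = ∑ k ∈ Finset.range n,
        ((-1:𝔽)^k * (g⁻¹)^k * ((qfact q k)⁻¹ * (qfact q (n-k))⁻¹) *
            (q ^ (-(2:ℤ)*(k:ℕ)) * q ^ (((n:ℕ):ℤ)-1) * g⁻¹ * Sgeo q (n-k))) •
            wrd 𝔽 (List.replicate k m ++ j :: List.replicate (n-k-1) m) := by
      rw [Finset.sum_range_succ, Nat.sub_self, Sgeo_zero, mul_zero, mul_zero, zero_smul, add_zero]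
    rw [eA, eB, ← Finset.sum_add_distrib]
    refine Finset.sum_eq_zero fun k hk => ?_
    rw [Finset.mem_range] at hk
    rw [show n-(k+1) = n-k-1 from by omega, ← add_smul, smul_eq_zero]
    left
    have := coeff_cancel q (g⁻¹) hq0 hq1 n k hk
    rw [show n-(k+1) = n-k-1 from by omega] at this
    calc _ = ((-1:𝔽)^(k+1) * (g⁻¹)^(k+1) * ((qfact q (k+1))⁻¹ * (qfact q (n-k-1))⁻¹)) * Sgeo q (k+1)
      + ((-1:𝔽)^k * (g⁻¹)^k * ((qfact q k)⁻¹ * (qfact q (n-k))⁻¹)) *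
          (q^(-(2:ℤ)*(k:ℕ)) * q^(((n:ℕ):ℤ)-1) * g⁻¹ * Sgeo q (n-k)) := by ring
      _ = 0 := this
  by_cases hmj : m = j
  · subst hmj
    have step : ∀ k ∈ Finset.range (n+1),
        ((-1:𝔽)^k * (g⁻¹)^k * ((qfact q k)⁻¹ * (qfact q (n-k))⁻¹)) •
            slh (FreeMonoid.of m) (r (wrd 𝔽 (List.replicate k i ++ m :: List.replicate (n-k) i)))
          = ((-1:𝔽)^k * q ^ ((k:ℤ)*(((n:ℕ):ℤ)-1)) * ((qfact q k)⁻¹ * (qfact q (n-k))⁻¹)) •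
              wrd 𝔽 (List.replicate n i) := by
      intro k hk
      rw [Finset.mem_range] at hk
      rw [rsl_j_word (cd := cd) (v := v) (β := β) (r := r) (hr1 := hr1) (hrθ := hrθ)
          (hrm := hrm) (i := i) (j := m) (hij := hij) k (n-k),
        show k + (n-k) = n from by omega, smul_smul]
      congr 1
      have hCk : (g⁻¹)^k * (v ^ (-(cd.c m i)) * g)^k = q ^ ((k:ℤ)*(((n:ℕ):ℤ)-1)) := by
        rw [hcji, mul_pow, ← zpow_natCast (q ^ ((((n:ℕ)):ℤ)-1)) k, ← zpow_mul,
          show ((((n:ℕ)):ℤ)-1)*(k:ℤ) = (k:ℤ)*((((n:ℕ)):ℤ)-1) from by ring]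
        calc (g⁻¹)^k * (q ^ ((k:ℤ)*((((n:ℕ)):ℤ)-1)) * g^k)
            = q ^ ((k:ℤ)*((((n:ℕ)):ℤ)-1)) * ((g⁻¹*g)^k) := by rw [mul_pow] ; ring
          _ = q ^ ((k:ℤ)*((((n:ℕ)):ℤ)-1)) := by rw [inv_mul_cancel₀ hgne, one_pow, mul_one]
      linear_combination ((-1:𝔽)^k * ((qfact q k)⁻¹ * (qfact q (n-k))⁻¹)) * hCk
    rw [Finset.sum_congr rfl step, ← Finset.sum_smul, smul_eq_zero]
    left
    exact gauss_sum q hq0 hq1 n hn1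
  · refine Finset.sum_eq_zero fun k _ => ?_
    rw [rsl_notin (cd := cd) (v := v) (β := β) (r := r) (hr1 := hr1) (hrθ := hrθ) (hrm := hrm)
        m _ (by
          intro hmem
          rcases List.mem_append.mp hmem with h | h
          · exact hmi (List.eq_of_mem_replicate h)
          · rcases List.mem_cons.mp h with h | h
            · exact hmj h
            · exact hmi (List.eq_of_mem_replicate h)), smul_zero]

end SerreAux


namespace SerreAux

set_option linter.unusedSectionVars false

variable {I : Type} [DecidableEq I] {𝔽 : Type} [Field 𝔽]
variable (cd : CartanDatum I) (v : 𝔽) (α β : MultForm I 𝔽)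
variable (r : FA 𝔽 I →ₗ[𝔽] TA 𝔽 I)
variable (hr1 : r 1 = tmul 1 1)
variable (hrθ : ∀ i : I, r (θ 𝔽 i) = tmul (θ 𝔽 i) 1 + tmul 1 (θ 𝔽 i))
variable (B : FA 𝔽 I →ₗ[𝔽] FA 𝔽 I →ₗ[𝔽] 𝔽)
variable (hBsymm : ∀ x y, B x y = B y x)
variable (hB1 : B 1 1 = 1)
variable (hBθ : ∀ i j : I, B (θ 𝔽 i) (θ 𝔽 j) = if i = j then (1 - v ^ (-(cd.c i i)))⁻¹ else 0)
variable (hBr : ∀ x y' y'', B x (y' * y'') = pairT α B (r x) (tmul y' y''))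
variable (hBl : ∀ x' x'' y, B (x' * x'') y = pairT α B (tmul x' x'') (r y))

lemma tmul_theta_one (k : I) :
    tmul (θ 𝔽 k) (1 : FA 𝔽 I) = MonoidAlgebra.single ((FreeMonoid.of k, (1:FreeMonoid I))) (1:𝔽) := by
  rw [θ_eq, MonoidAlgebra.one_def, tmul_single, one_mul]

lemma tmul_one_theta (k : I) :
    tmul (1 : FA 𝔽 I) (θ 𝔽 k) = MonoidAlgebra.single (((1:FreeMonoid I), FreeMonoid.of k)) (1:𝔽) := by
  rw [θ_eq, MonoidAlgebra.one_def, tmul_single, one_mul]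

lemma tmul_one_one :
    tmul (1 : FA 𝔽 I) (1 : FA 𝔽 I)
      = MonoidAlgebra.single (((1:FreeMonoid I), (1:FreeMonoid I))) (1:𝔽) := by
  rw [MonoidAlgebra.one_def, tmul_single, one_mul]

lemma pairT_single (p q : FreeMonoid I × FreeMonoid I) (a b : 𝔽) :
    pairT α B (MonoidAlgebra.single p a) (MonoidAlgebra.single q b)
      = a * b * α.f (wt p.1) (wt p.2)
          * B (MonoidAlgebra.single p.1 1) (MonoidAlgebra.single q.1 1)
          * B (MonoidAlgebra.single p.2 1) (MonoidAlgebra.single q.2 1) := by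
  unfold pairT
  rw [MonoidAlgebra.coeff_single, MonoidAlgebra.coeff_single, Finsupp.sum_single_index,
    Finsupp.sum_single_index]
  · simp
  · simp [Finsupp.sum_single_index]

lemma pairT_add_left (z1 z2 z : TA 𝔽 I) :
    pairT α B (z1 + z2) z = pairT α B z1 z + pairT α B z2 z := by
  unfold pairT
  rw [MonoidAlgebra.coeff_add]
  refine Finsupp.sum_add_index' (by simp) ?_
  intro p b1 b2
  rw [← Finsupp.sum_add]
  refine Finsupp.sum_congr fun q _ => ?_
  ring

lemma pairT_add_right (z z1 z2 : TA 𝔽 I) :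
    pairT α B z (z1 + z2) = pairT α B z z1 + pairT α B z z2 := by
  unfold pairT
  rw [MonoidAlgebra.coeff_add, ← Finsupp.sum_add]
  refine Finsupp.sum_congr fun p a => ?_
  refine Finsupp.sum_add_index' (by simp) ?_
  intro q b1 b2
  ring

lemma pairT_sum_right_single (z : TA 𝔽 I) (q0 : FreeMonoid I × FreeMonoid I) :
    pairT α B z (MonoidAlgebra.single q0 (1:𝔽))
      = Finsupp.sum z.coeff fun p a => a * α.f (wt p.1) (wt p.2)
          * B (MonoidAlgebra.single p.1 1) (MonoidAlgebra.single q0.1 1)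
          * B (MonoidAlgebra.single p.2 1) (MonoidAlgebra.single q0.2 1) := by
  unfold pairT
  refine Finsupp.sum_congr fun p a => ?_
  rw [MonoidAlgebra.coeff_single, Finsupp.sum_single_index (by simp), mul_one]

include hrθ hBr hB1 in
lemma Bθ1 (k : I) : B (θ 𝔽 k) 1 = 0 := by
  have h := hBr (θ 𝔽 k) 1 1
  rw [one_mul, hrθ k, tmul_theta_one, tmul_one_theta, tmul_one_one, pairT_add_left,
    pairT_single, pairT_single] at h
  simp only [wt_one, wt_of, mf_zero_right, mf_zero_left,
    show MonoidAlgebra.single (1:FreeMonoid I) (1:𝔽) = (1 : FA 𝔽 I) from MonoidAlgebra.one_def.symm,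
    show MonoidAlgebra.single (FreeMonoid.of k) (1:𝔽) = θ 𝔽 k from rfl, hB1,
    one_mul, mul_one] at h
  linear_combination (-1 : 𝔽) * h

include hr1 hrθ hBr hB1 hBl in
lemma Bw1 (l : List I) (hl : l ≠ []) : B (wrd 𝔽 l) 1 = 0 := by
  cases l with
  | nil => exact absurd rfl hl
  | cons m l =>
      have h := hBl (θ 𝔽 m) (wrd 𝔽 l) 1
      rw [wrd_cons, hr1, tmul_one_one,
        show tmul (θ 𝔽 m) (wrd 𝔽 l) = MonoidAlgebra.single ((FreeMonoid.of m, FreeMonoid.ofList l)) (1:𝔽)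
          from by rw [θ_eq, wrd, tmul_single, one_mul],
        pairT_single] at h
      rw [h, show MonoidAlgebra.single (FreeMonoid.of m) (1:𝔽) = θ 𝔽 m from rfl,
        show MonoidAlgebra.single (1:FreeMonoid I) (1:𝔽) = (1 : FA 𝔽 I) from
          MonoidAlgebra.one_def.symm,
        Bθ1 (α := α) (r := r) (hrθ := hrθ) (B := B) (hBr := hBr) (hB1 := hB1) m]
      ring

include hr1 hrθ hBr hB1 hBl hBsymm in
lemma B1w (l : List I) (hl : l ≠ []) : B 1 (wrd 𝔽 l) = 0 := by
  rw [hBsymm]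
  exact Bw1 (α := α) (r := r) (hr1 := hr1) (hrθ := hrθ) (B := B) (hBr := hBr) (hB1 := hB1) (hBl := hBl) l hl

include hr1 hrθ hBr hB1 hBl in
lemma Bwθ (m x : I) (l : List I) (k : I) : B (wrd 𝔽 (m :: x :: l)) (θ 𝔽 k) = 0 := by
  have h := hBl (θ 𝔽 m) (wrd 𝔽 (x :: l)) (θ 𝔽 k)
  rw [wrd_cons, hrθ k, tmul_theta_one, tmul_one_theta,
    show tmul (θ 𝔽 m) (wrd 𝔽 (x :: l))
        = MonoidAlgebra.single ((FreeMonoid.of m, FreeMonoid.ofList (x :: l))) (1:𝔽)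
      from by rw [θ_eq, wrd, tmul_single, one_mul],
    pairT_add_right, pairT_single, pairT_single] at h
  rw [h, show MonoidAlgebra.single (FreeMonoid.of m) (1:𝔽) = θ 𝔽 m from rfl,
    show MonoidAlgebra.single (1:FreeMonoid I) (1:𝔽) = (1 : FA 𝔽 I) from
      MonoidAlgebra.one_def.symm,
    show MonoidAlgebra.single (FreeMonoid.ofList (x :: l)) (1:𝔽) = wrd 𝔽 (x :: l) from rfl,
    Bθ1 (α := α) (r := r) (hrθ := hrθ) (B := B) (hBr := hBr) (hB1 := hB1) m,
    Bw1 (α := α) (r := r) (hr1 := hr1) (hrθ := hrθ) (B := B) (hBr := hBr) (hB1 := hB1) (hBl := hBl) (x :: l) (List.cons_ne_nil x l)]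
  ring

end SerreAux


end AUX

end
theorem twisted_serre_relations
    {I : Type} [Fintype I] [DecidableEq I] (cd : CartanDatum I)
    {𝔽 : Type} [Field 𝔽] [CharZero 𝔽] (v : 𝔽) (hv : Transcendental ℚ v)
    (α β : MultForm I 𝔽)
    (hαβ : ∀ i j : I, β.f (δN i) (δN j) * α.f (δN j) (δN i)
      = β.f (δN j) (δN i) * α.f (δN i) (δN j))
    (hββ : ∀ i j : I, β.f (δN i) (δN j) * β.f (δN j) (δN i) = 1)
    (hβii : ∀ i : I, β.f (δN i) (δN i) = 1)
    (r : FA 𝔽 I →ₗ[𝔽] TA 𝔽 I)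
    (hr1 : r 1 = tmul 1 1)
    (hrθ : ∀ i : I, r (θ 𝔽 i) = tmul (θ 𝔽 i) 1 + tmul 1 (θ 𝔽 i))
    (hrm : ∀ x y : FA 𝔽 I, r (x * y) = tMul cd v β (r x) (r y))
    (B : FA 𝔽 I →ₗ[𝔽] FA 𝔽 I →ₗ[𝔽] 𝔽)
    (hBsymm : ∀ x y, B x y = B y x)
    (hB1 : B 1 1 = 1)
    (hBθ : ∀ i j : I, B (θ 𝔽 i) (θ 𝔽 j) = if i = j then (1 - v ^ (-(cd.c i i)))⁻¹ else 0)
    (hBr : ∀ x y' y'', B x (y' * y'') = pairT α B (r x) (tmul y' y''))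
    (hBl : ∀ x' x'' y, B (x' * x'') y = pairT α B (tmul x' x'') (r y))
    :
    ∀ i j : I, i ≠ j → ∀ z, B (Dij cd v (fun a b => β.f (δN a) (δN b)) i j) z = 0 := by
  intro i j hij z
  have hv0 : v ≠ 0 := trans_ne_zero v hv
  have hv1 : ∀ N : ℤ, N ≠ 0 → v ^ N ≠ 1 := fun N hN => trans_zpow_ne_one v hv N hN
  have key : ∀ m : I, SerreAux.slh (FreeMonoid.of m)
      (r (Dij cd v (fun a b => β.f (δN a) (δN b)) i j)) = 0 :=
    fun m => SerreAux.rsl_D cd v β r hr1 hrθ hrm i j hij hv0 hv1 (hββ i j) (hβii i) m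
  have hword : ∀ w : FreeMonoid I, B (Dij cd v (fun a b => β.f (δN a) (δN b)) i j)
      (MonoidAlgebra.single w 1) = 0 := by
    intro w
    have hw : w = FreeMonoid.ofList (FreeMonoid.toList w) := (FreeMonoid.ofList_toList w).symm
    rcases hL : FreeMonoid.toList w with _ | ⟨m, l⟩
    · rw [hw, hL,
        show MonoidAlgebra.single (FreeMonoid.ofList ([] : List I)) (1:𝔽) = (1 : FA 𝔽 I)
          from MonoidAlgebra.one_def.symm,
        hBsymm, SerreAux.Dij_eq cd v β i j, map_sum]
      refine Finset.sum_eq_zero fun k _ => ?_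
      rw [map_smul, SerreAux.B1w (α := α) (r := r) (hr1 := hr1) (hrθ := hrθ) (B := B)
          (hBsymm := hBsymm) (hB1 := hB1) (hBr := hBr) (hBl := hBl)
          (List.replicate k i ++ j :: List.replicate ((1 - cd.a i j).toNat - k) i)
          (by simp), smul_zero]
    · rw [hw, hL,
        show MonoidAlgebra.single (FreeMonoid.ofList (m :: l)) (1:𝔽) = SerreAux.wrd 𝔽 (m::l)
          from rfl,
        ← SerreAux.wrd_cons, hBr _ (θ 𝔽 m) (SerreAux.wrd 𝔽 l),
        show tmul (θ 𝔽 m) (SerreAux.wrd 𝔽 l)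
            = MonoidAlgebra.single ((FreeMonoid.of m, FreeMonoid.ofList l)) (1:𝔽)
          from by rw [SerreAux.θ_eq, SerreAux.wrd, SerreAux.tmul_single, one_mul],
        SerreAux.pairT_sum_right_single, Finsupp.sum]
      refine Finset.sum_eq_zero fun p hp => ?_
      have hp1 : p.1 = FreeMonoid.ofList (FreeMonoid.toList p.1) :=
        (FreeMonoid.ofList_toList _).symm
      rcases hL1 : FreeMonoid.toList p.1 with _ | ⟨m', l1⟩
      · have hz : B (MonoidAlgebra.single p.1 1) (MonoidAlgebra.single (FreeMonoid.of m) 1)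
            = 0 := by
          rw [hp1, hL1,
            show MonoidAlgebra.single (FreeMonoid.ofList ([] : List I)) (1:𝔽) = (1 : FA 𝔽 I)
              from MonoidAlgebra.one_def.symm,
            hBsymm]
          exact SerreAux.Bθ1 (α := α) (r := r) (hrθ := hrθ) (B := B) (hBr := hBr) (hB1 := hB1) m
        rw [hz, mul_zero, zero_mul]
      · rcases hL2 : l1 with _ | ⟨x, l2⟩
        · subst hL2
          by_cases hm : m' = m
          · have hz : (r (Dij cd v (fun a b => β.f (δN a) (δN b)) i j)).coeff p = 0 := by
              have h0 := key m
              have hpp : p = (FreeMonoid.of m, p.2) := by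
                refine Prod.ext ?_ rfl
                rw [hp1, hL1, hm] ; rfl
              rw [hpp, ← SerreAux.slh_apply, h0]
              rfl
            rw [hz, zero_mul, zero_mul, zero_mul]
          · have hz : B (MonoidAlgebra.single p.1 1) (MonoidAlgebra.single (FreeMonoid.of m) 1)
                = 0 := by
              rw [hp1, hL1,
                show MonoidAlgebra.single (FreeMonoid.ofList [m']) (1:𝔽) = θ 𝔽 m' from rfl,
                show MonoidAlgebra.single (FreeMonoid.of m) (1:𝔽) = θ 𝔽 m from rfl,
                hBθ, if_neg hm]
            rw [hz, mul_zero, zero_mul]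
        · subst hL2
          have hz : B (MonoidAlgebra.single p.1 1) (MonoidAlgebra.single (FreeMonoid.of m) 1)
              = 0 := by
            rw [hp1, hL1]
            exact SerreAux.Bwθ (α := α) (r := r) (hr1 := hr1) (hrθ := hrθ) (B := B)
              (hBr := hBr) (hB1 := hB1) (hBl := hBl) m' x l2 m
          rw [hz, mul_zero, zero_mul]
  refine MonoidAlgebra.induction_linear (motive := fun y => B (Dij cd v (fun a b => β.f (δN a) (δN b)) i j) y = 0) z ?_ ?_ ?_
  · exact map_zero _
  · intro f g hf hg
    rw [map_add, hf, hg, add_zero]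
  · intro a b
    have hs : (MonoidAlgebra.single a b : FA 𝔽 I) = b • MonoidAlgebra.single a (1:𝔽) := by
      rw [MonoidAlgebra.smul_single, smul_eq_mul, mul_one]
    rw [hs, map_smul, hword, smul_zero]
end

section
/- For all ν₁,ν₂,τ₁,τ₂∈ℤ[I], every homogeneous x∈'𝔣⁺ and every homogeneous y∈'𝔣⁻, one has φ(K_{ν₁}xJ_{ν₂}, K'_{τ₁}yJ'_{τ₂}) = ⟨ν₁,τ₁⟩·⟨ν₁,|y|⟩·⟨|x|,τ₁⟩·ξ(τ₁,ν₂)·φ(x,y). -/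
open scoped TensorProduct

noncomputable section

variable {I : Type}

/-- The generator `i` of `ℤ[I]`. -/
def δZ (i : I) : I →₀ ℤ := Finsupp.single i 1

/-- The inclusion `ℕ[I] → ℤ[I]`. -/
def nz (ν : I →₀ ℕ) : I →₀ ℤ := Finsupp.mapRange (fun n : ℕ => (n : ℤ)) rfl ν

/-- The multiplicative extension to `ℤ[I] × ℤ[I]` of generator values `g : I → I → 𝔽`. -/
def extZ {𝔽 : Type} [Field 𝔽] (g : I → I → 𝔽) (ν μ : I →₀ ℤ) : 𝔽 :=
  ν.prod fun i m => μ.prod fun j n => g i j ^ (m * n)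

/-- The form `⟨i,j⟩ = v^{-i·j} β(i,j) ξ(j,i)`, extended multiplicatively to `ℤ[I]`. -/
def ang {𝔽 : Type} [Field 𝔽] (cd : CartanDatum I) (v : 𝔽) (βg ξg : I → I → 𝔽) :
    (I →₀ ℤ) → (I →₀ ℤ) → 𝔽 :=
  extZ fun i j => v ^ (-(cd.c i j)) * βg i j * ξg j i

/-- The monomial in `F : I → A` associated with a word `w`. -/
def wordProd {A : Type} [Monoid A] (F : I → A) (w : FreeMonoid I) : A :=
  ((FreeMonoid.toList w).map F).prod

/-- `x` is homogeneous of degree `μ` in the subalgebra generated by the image of `F`. -/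
def HomogIn (𝔽 : Type) [Field 𝔽] [DecidableEq I] {A : Type} [Ring A] [Algebra 𝔽 A]
    (F : I → A) (μ : I →₀ ℕ) (x : A) : Prop :=
  x ∈ Submodule.span 𝔽 {z | ∃ w, wt w = μ ∧ z = wordProd F w}

end

section AuxProof

variable {I : Type} {𝔽 : Type} [Field 𝔽]

lemma extZ_zero_left (g : I → I → 𝔽) (μ : I →₀ ℤ) : extZ g 0 μ = 1 :=
  Finsupp.prod_zero_index

lemma extZ_zero_right (g : I → I → 𝔽) (ν : I →₀ ℤ) : extZ g ν 0 = 1 := by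
  simp [extZ, Finsupp.prod_zero_index, Finsupp.prod]

lemma extZ_add_left (g : I → I → 𝔽) (hg : ∀ i j, g i j ≠ 0) (a b μ : I →₀ ℤ) :
    extZ g (a + b) μ = extZ g a μ * extZ g b μ := by
  unfold extZ
  apply Finsupp.prod_add_index'
  · intro i; simp [Finsupp.prod]
  · intro i m₁ m₂
    rw [← Finsupp.prod_mul]
    exact Finsupp.prod_congr fun j _ => by rw [add_mul, zpow_add₀ (hg i j)]

lemma extZ_add_right (g : I → I → 𝔽) (hg : ∀ i j, g i j ≠ 0) (a μ μ' : I →₀ ℤ) :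
    extZ g a (μ + μ') = extZ g a μ * extZ g a μ' := by
  unfold extZ
  rw [← Finsupp.prod_mul]
  refine Finsupp.prod_congr fun i _ => ?_
  apply Finsupp.prod_add_index'
  · intro j; simp
  · intro j n₁ n₂; rw [mul_add, zpow_add₀ (hg i j)]

lemma eigen_gen {Ap Am : Type} [Ring Ap] [Algebra 𝔽 Ap] [AddCommGroup Am] [Module 𝔽 Am]
    (ρ : Ap →ₗ[𝔽] Module.End 𝔽 Am)
    (hρanti : ∀ x y : Ap, ρ (x * y) = ρ y * ρ x) (hρ1 : ρ 1 = 1)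
    (G : (I →₀ ℤ) → Ap) (hG0 : G 0 = 1) (hGadd : ∀ a b, G (a + b) = G a * G b)
    (s : (I →₀ ℤ) → 𝔽) (hs0 : s 0 = 1) (hsadd : ∀ a b, s (a + b) = s a * s b)
    (z : Am)
    (hgen : ∀ i : I, ρ (G (δZ i)) z = s (δZ i) • z)
    (hgeninv : ∀ i : I, ρ (G (-δZ i)) z = s (-δZ i) • z) :
    ∀ ν, ρ (G ν) z = s ν • z := by
  have key : ∀ (a : I) (m : ℤ), ρ (G (Finsupp.single a m)) z = s (Finsupp.single a m) • z := by
    intro a m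
    induction m using Int.induction_on with
    | zero => simp [hG0, hρ1, hs0]
    | succ n ih =>
      have h1 : Finsupp.single a ((n : ℤ) + 1) = Finsupp.single a (n : ℤ) + δZ a := by
        rw [Finsupp.single_add]; rfl
      rw [h1, hGadd, hρanti, Module.End.mul_apply, ih, map_smul, hgen, hsadd, smul_smul]
    | pred n ih =>
      have h2 : -δZ a = Finsupp.single a (-1 : ℤ) := by
        rw [δZ, ← Finsupp.single_neg]
      have h1 : Finsupp.single a (-(n : ℤ) - 1) = Finsupp.single a (-(n : ℤ)) + (-δZ a) := by
        rw [sub_eq_add_neg, Finsupp.single_add, h2]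
      rw [h1, hGadd, hρanti, Module.End.mul_apply, ih, map_smul, hgeninv, hsadd, smul_smul]
  intro ν
  induction ν using Finsupp.induction with
  | zero => simp [hG0, hρ1, hs0]
  | single_add a b f _ _ ih =>
    rw [hGadd, hρanti, Module.End.mul_apply, key, map_smul, ih, hsadd, smul_smul]

end AuxProof

theorem phi_toral_factor
    {I : Type} [Fintype I] [DecidableEq I] (cd : CartanDatum I)
    {𝔽 : Type} [Field 𝔽] [CharZero 𝔽] (v : 𝔽) (hv : Transcendental ℚ v)
    (βg ξg : I → I → 𝔽)
    (hββ : ∀ i j, βg i j * βg j i = 1) (hβii : ∀ i, βg i i = 1)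
    (hξsymm : ∀ i j, ξg i j = ξg j i) (hξne : ∀ i j, ξg i j ≠ 0)
    {Ap : Type} [Ring Ap] [Algebra 𝔽 Ap]
    (E : I → Ap) (K Jp : (I →₀ ℤ) → Ap)
    (hK0 : K 0 = 1) (hKadd : ∀ a b, K (a + b) = K a * K b)
    (hJ0 : Jp 0 = 1) (hJadd : ∀ a b, Jp (a + b) = Jp a * Jp b)
    (hKJ : ∀ a b, K a * Jp b = Jp b * K a)
    (hKE : ∀ i j : I, K (δZ i) * E j = ang cd v βg ξg (δZ i) (δZ j) • (E j * K (δZ i)))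
    (hJE : ∀ i j : I, Jp (δZ i) * E j = ξg j i • (E j * Jp (δZ i)))
    (bp : Module.Basis ((I →₀ ℤ) × FreeMonoid I × (I →₀ ℤ)) 𝔽 Ap)
    (hbp : ∀ p, bp p = K p.1 * wordProd E p.2.1 * Jp p.2.2)
    {Am : Type} [Ring Am] [Algebra 𝔽 Am]
    (F : I → Am) (K' J' : (I →₀ ℤ) → Am)
    (hK'0 : K' 0 = 1) (hK'add : ∀ a b, K' (a + b) = K' a * K' b)
    (hJ'0 : J' 0 = 1) (hJ'add : ∀ a b, J' (a + b) = J' a * J' b)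
    (hK'J' : ∀ a b, K' a * J' b = J' b * K' a)
    (hK'F : ∀ i j : I, K' (δZ i) * F j
      = (ang cd v βg ξg (δZ j) (δZ i) * (ξg i j)⁻¹) • (F j * K' (δZ i)))
    (hJ'F : ∀ i j : I, J' (δZ i) * F j = F j * J' (δZ i))
    (bm : Module.Basis ((I →₀ ℤ) × FreeMonoid I × (I →₀ ℤ)) 𝔽 Am)
    (hbm : ∀ p, bm p = K' p.1 * wordProd F p.2.1 * J' p.2.2)
    (cK cJ : (I →₀ ℤ) → (Am →ₗ[𝔽] Am))
    (hcK : ∀ (ν τ₁ τ₂ : I →₀ ℤ) (w : FreeMonoid I),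
      cK ν (K' τ₁ * wordProd F w * J' τ₂)
        = (ang cd v βg ξg ν τ₁ * ang cd v βg ξg ν (nz (wt w))) • (K' τ₁ * wordProd F w * J' τ₂))
    (hcJ : ∀ (ν τ₁ τ₂ : I →₀ ℤ) (w : FreeMonoid I),
      cJ ν (K' τ₁ * wordProd F w * J' τ₂)
        = (extZ ξg τ₁ ν * extZ ξg (nz (wt w)) ν) • (K' τ₁ * wordProd F w * J' τ₂))
    (iS : I → (Am →ₗ[𝔽] Am))
    (hiS0 : ∀ (j : I) (τ₁ τ₂ : I →₀ ℤ), iS j (K' τ₁ * J' τ₂) = 0)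
    (hiSF : ∀ j i : I, iS j (F i) = if i = j then ξg i j • (1 : Am) else 0)
    (hiSmul : ∀ (j : I) (x y : Am), iS j (x * y) = iS j x * cJ (δZ j) y + cK (δZ j) x * iS j y)
    (ρ : Ap →ₗ[𝔽] Module.End 𝔽 Am)
    (hρanti : ∀ x y : Ap, ρ (x * y) = ρ y * ρ x) (hρ1 : ρ 1 = 1)
    (hρE : ∀ j : I, ρ (E j) = (v ^ (-(cd.d j)) - v ^ (cd.d j))⁻¹ • iS j)
    (hρK : ∀ i : I, ρ (K (δZ i)) = cK (δZ i))
    (hρKinv : ∀ i : I, ρ (K (-(δZ i))) = cK (-(δZ i)))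
    (hρJ : ∀ i : I, ρ (Jp (δZ i)) = cJ (δZ i))
    (hρJinv : ∀ i : I, ρ (Jp (-(δZ i))) = cJ (-(δZ i)))
    (εm : Am →ₐ[𝔽] 𝔽)
    (hεmF : ∀ i, εm (F i) = 0) (hεmK' : ∀ ν, εm (K' ν) = 1) (hεmJ' : ∀ ν, εm (J' ν) = 1)
    :
    ∀ (ν₁ ν₂ τ₁ τ₂ : I →₀ ℤ) (μx μy : I →₀ ℕ) (x : Ap) (y : Am),
      HomogIn 𝔽 E μx x → HomogIn 𝔽 F μy y →
      εm (ρ (K ν₁ * x * Jp ν₂) (K' τ₁ * y * J' τ₂))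
        = ang cd v βg ξg ν₁ τ₁ * ang cd v βg ξg ν₁ (nz μy)
            * ang cd v βg ξg (nz μx) τ₁ * extZ ξg τ₁ ν₂ * εm (ρ x y) := by
  clear hbp hbm hKE hJE hK'F hJ'F hKJ hK'J' hβii hξsymm
  -- nonvanishing of the generator values of `ang`
  have hv0 : v ≠ 0 := by
    intro h; exact hv (by rw [h]; exact isAlgebraic_zero)
  set gA : I → I → 𝔽 := fun i j => v ^ (-(cd.c i j)) * βg i j * ξg j i with hgA
  have hgAne : ∀ i j, gA i j ≠ 0 := fun i j =>
    mul_ne_zero (mul_ne_zero (zpow_ne_zero _ hv0) (left_ne_zero_of_mul_eq_one (hββ i j)))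
      (hξne j i)
  have hangdef : ang cd v βg ξg = extZ gA := rfl
  have hA0l : ∀ μ, ang cd v βg ξg 0 μ = 1 := fun μ => extZ_zero_left gA μ
  have hA0r : ∀ ν, ang cd v βg ξg ν 0 = 1 := fun ν => extZ_zero_right gA ν
  have hAaddl : ∀ a b μ, ang cd v βg ξg (a + b) μ
      = ang cd v βg ξg a μ * ang cd v βg ξg b μ := extZ_add_left gA hgAne
  -- weight lemmas
  have hwt1 : wt (1 : FreeMonoid I) = 0 := by
    simp [wt, FreeMonoid.toList_one]
  have hwtmul : ∀ (x : I) (w : FreeMonoid I), wt (FreeMonoid.of x * w) = δN x + wt w := by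
    intro x w
    ext i
    simp only [wt, FreeMonoid.toList_of_mul, Multiset.cons_coe, Multiset.toFinsupp_apply,
      Multiset.count_cons, Finsupp.add_apply, δN, Finsupp.single_apply]
    rcases eq_or_ne x i with h | h
    · subst h; simp [add_comm]
    · simp [h, Ne.symm h]
  have hnz0 : nz (0 : I →₀ ℕ) = 0 := by
    ext i; simp [nz]
  have hnzadd : ∀ a b : I →₀ ℕ, nz (a + b) = nz a + nz b := by
    intro a b; ext i; simp [nz]
  have hnzδ : ∀ x : I, nz (δN x) = δZ x := by
    intro x; ext i
    simp [nz, δN, δZ, Finsupp.single_apply, apply_ite (Nat.cast : ℕ → ℤ)]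
  -- wordProd lemmas
  have hwpF1 : wordProd F 1 = 1 := rfl
  have hwpFc : ∀ (x : I) (w : FreeMonoid I),
      wordProd F (FreeMonoid.of x * w) = F x * wordProd F w := by
    intro x w; simp [wordProd, FreeMonoid.toList_of_mul]
  have hwpFof : ∀ x : I, wordProd F (FreeMonoid.of x) = F x := by
    intro x; simp [wordProd]
  have hwpE1 : wordProd E 1 = 1 := rfl
  have hwpEc : ∀ (x : I) (w : FreeMonoid I),
      wordProd E (FreeMonoid.of x * w) = E x * wordProd E w := by
    intro x w; simp [wordProd, FreeMonoid.toList_of_mul]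
  -- basic computations with iS, cK, cJ
  have hiSJ'0 : ∀ (j : I) (τ₂ : I →₀ ℤ), iS j (J' τ₂) = 0 := by
    intro j τ₂; have h := hiS0 j 0 τ₂; rwa [hK'0, one_mul] at h
  have hiSK'0 : ∀ (j : I) (τ₁ : I →₀ ℤ), iS j (K' τ₁) = 0 := by
    intro j τ₁; have h := hiS0 j τ₁ 0; rwa [hJ'0, mul_one] at h
  have hcKK' : ∀ (ν τ₁ : I →₀ ℤ), cK ν (K' τ₁) = ang cd v βg ξg ν τ₁ • K' τ₁ := by
    intro ν τ₁
    have h := hcK ν τ₁ 0 1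
    rwa [hwpF1, mul_one, hJ'0, mul_one, hwt1, hnz0, hA0r, mul_one] at h
  have hcJJ' : ∀ (j : I) (τ₂ : I →₀ ℤ), cJ (δZ j) (J' τ₂) = J' τ₂ := by
    intro j τ₂
    have h := hcJ (δZ j) 0 τ₂ 1
    rw [hwpF1, hK'0, one_mul, one_mul, hwt1, hnz0, extZ_zero_left] at h
    simpa using h
  have hcJF : ∀ (j : I) (w : FreeMonoid I),
      cJ (δZ j) (wordProd F w) = extZ ξg (nz (wt w)) (δZ j) • wordProd F w := by
    intro j w
    have h := hcJ (δZ j) 0 0 w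
    rwa [hK'0, one_mul, hJ'0, mul_one, extZ_zero_left, one_mul] at h
  have hcKF : ∀ (j : I) (w : FreeMonoid I),
      cK (δZ j) (wordProd F w) = ang cd v βg ξg (δZ j) (nz (wt w)) • wordProd F w := by
    intro j w
    have h := hcK (δZ j) 0 0 w
    rwa [hK'0, one_mul, hJ'0, mul_one, hA0r, one_mul] at h
  have hiSK'mul : ∀ (j : I) (τ₁ : I →₀ ℤ) (z : Am),
      iS j (K' τ₁ * z) = ang cd v βg ξg (δZ j) τ₁ • (K' τ₁ * iS j z) := by
    intro j τ₁ z
    rw [hiSmul, hiSK'0, zero_mul, zero_add, hcKK', smul_mul_assoc]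
  have hiSJ'mul : ∀ (j : I) (τ₂ : I →₀ ℤ) (z : Am),
      iS j (z * J' τ₂) = iS j z * J' τ₂ := by
    intro j τ₂ z
    rw [hiSmul, hiSJ'0, mul_zero, add_zero, hcJJ']
  -- the fundamental intertwining step for a single generator
  have hstepE : ∀ (j : I) (τ₁ τ₂ : I →₀ ℤ) (z : Am),
      ρ (E j) (K' τ₁ * z * J' τ₂)
        = ang cd v βg ξg (δZ j) τ₁ • (K' τ₁ * ρ (E j) z * J' τ₂) := by
    intro j τ₁ τ₂ z
    rw [hρE, LinearMap.smul_apply, LinearMap.smul_apply, hiSJ'mul, hiSK'mul]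
    simp only [smul_mul_assoc, mul_smul_comm, smul_smul]
    congr 1
    ring
  -- intertwining for words in the E's
  have hstepW : ∀ (w : FreeMonoid I) (τ₁ τ₂ : I →₀ ℤ) (z : Am),
      ρ (wordProd E w) (K' τ₁ * z * J' τ₂)
        = ang cd v βg ξg (nz (wt w)) τ₁ • (K' τ₁ * ρ (wordProd E w) z * J' τ₂) := by
    intro w
    induction w using FreeMonoid.recOn with
    | one =>
      intro τ₁ τ₂ z
      rw [hwpE1, hρ1, hwt1, hnz0, hA0l, one_smul, Module.End.one_apply, Module.End.one_apply]
    | of_mul x xs ihxs =>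
      intro τ₁ τ₂ z
      rw [hwpEc, hρanti, Module.End.mul_apply, Module.End.mul_apply, hstepE, map_smul, ihxs,
        hwtmul, hnzadd, hnzδ, hAaddl, smul_smul]
  -- intertwining for homogeneous elements of 'f⁺
  have hstepX : ∀ (μx : I →₀ ℕ) (x : Ap), HomogIn 𝔽 E μx x → ∀ (τ₁ τ₂ : I →₀ ℤ) (z : Am),
      ρ x (K' τ₁ * z * J' τ₂) = ang cd v βg ξg (nz μx) τ₁ • (K' τ₁ * ρ x z * J' τ₂) := by
    intro μx x hx
    refine Submodule.span_induction ?_ ?_ ?_ ?_ hx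
    · rintro x ⟨w, hw, rfl⟩ τ₁ τ₂ z
      rw [hstepW, hw]
    · intro τ₁ τ₂ z
      simp
    · intro a b _ _ iha ihb τ₁ τ₂ z
      simp only [map_add, LinearMap.add_apply, mul_add, add_mul, smul_add]
      rw [iha, ihb]
    · intro c a _ iha τ₁ τ₂ z
      rw [map_smul, LinearMap.smul_apply, LinearMap.smul_apply, iha, mul_smul_comm,
        smul_mul_assoc, smul_comm]
  -- eigenvalue property of ρ (K ν₁) on K' τ₁ * y * J' τ₂ for homogeneous y
  have hKY : ∀ (ν₁ τ₁ τ₂ : I →₀ ℤ) (μy : I →₀ ℕ) (y : Am), HomogIn 𝔽 F μy y →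
      ρ (K ν₁) (K' τ₁ * y * J' τ₂)
        = (ang cd v βg ξg ν₁ τ₁ * ang cd v βg ξg ν₁ (nz μy)) • (K' τ₁ * y * J' τ₂) := by
    intro ν₁ τ₁ τ₂ μy y hy
    refine Submodule.span_induction ?_ ?_ ?_ ?_ hy
    · rintro y ⟨w, hw, rfl⟩
      refine eigen_gen ρ hρanti hρ1 K hK0 hKadd
        (fun ν => ang cd v βg ξg ν τ₁ * ang cd v βg ξg ν (nz μy)) ?_ ?_ _ ?_ ?_ ν₁
      · simp only [hA0l, one_mul]
      · intro a b; simp only [hAaddl]; ring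
      · intro i; rw [hρK, hcK, hw]
      · intro i; rw [hρKinv, hcK, hw]
    · simp
    · intro a b _ _ iha ihb
      simp only [mul_add, add_mul, map_add, smul_add]
      rw [iha, ihb]
    · intro c a _ iha
      rw [mul_smul_comm, smul_mul_assoc, map_smul, iha, smul_comm]
  -- the subspace spanned by F-monomials
  have hWmem : ∀ w : FreeMonoid I,
      wordProd F w ∈ Submodule.span 𝔽 {z : Am | ∃ w, z = wordProd F w} :=
    fun w => Submodule.subset_span ⟨w, rfl⟩
  have hmulF : ∀ (x : I) (z : Am), z ∈ Submodule.span 𝔽 {z : Am | ∃ w, z = wordProd F w} →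
      F x * z ∈ Submodule.span 𝔽 {z : Am | ∃ w, z = wordProd F w} := by
    intro x z hz
    refine Submodule.span_induction ?_ ?_ ?_ ?_ hz
    · rintro z ⟨w, rfl⟩
      exact Submodule.subset_span ⟨FreeMonoid.of x * w, (hwpFc x w).symm⟩
    · rw [mul_zero]; exact zero_mem _
    · intro a b _ _ iha ihb; rw [mul_add]; exact add_mem iha ihb
    · intro c a _ iha; rw [mul_smul_comm]; exact Submodule.smul_mem _ _ iha
  have hiSS : ∀ (j : I) (z : Am), z ∈ Submodule.span 𝔽 {z : Am | ∃ w, z = wordProd F w} →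
      iS j z ∈ Submodule.span 𝔽 {z : Am | ∃ w, z = wordProd F w} := by
    intro j z hz
    refine Submodule.span_induction ?_ ?_ ?_ ?_ hz
    · rintro z ⟨w, rfl⟩
      induction w using FreeMonoid.recOn with
      | one =>
        have h1 : wordProd F 1 = K' 0 * J' 0 := by rw [hwpF1, hK'0, hJ'0, one_mul]
        rw [h1, hiS0]; exact zero_mem _
      | of_mul x xs ihxs =>
        rw [hwpFc, hiSmul]
        apply add_mem
        · rw [hiSF, hcJF]
          by_cases hxj : x = j
          · rw [if_pos hxj, smul_mul_assoc, one_mul, smul_smul]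
            exact Submodule.smul_mem _ _ (hWmem xs)
          · rw [if_neg hxj, zero_mul]; exact zero_mem _
        · have h2 : cK (δZ j) (F x)
              = ang cd v βg ξg (δZ j) (nz (wt (FreeMonoid.of x))) • F x := by
            rw [← hwpFof x, hcKF]
          rw [h2, smul_mul_assoc]
          exact Submodule.smul_mem _ _ (hmulF x _ ihxs)
    · rw [map_zero]; exact zero_mem _
    · intro a b _ _ iha ihb; rw [map_add]; exact add_mem iha ihb
    · intro c a _ iha; rw [map_smul]; exact Submodule.smul_mem _ _ iha
  have hρES : ∀ (j : I) (z : Am), z ∈ Submodule.span 𝔽 {z : Am | ∃ w, z = wordProd F w} →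
      ρ (E j) z ∈ Submodule.span 𝔽 {z : Am | ∃ w, z = wordProd F w} := by
    intro j z hz
    rw [hρE, LinearMap.smul_apply]
    exact Submodule.smul_mem _ _ (hiSS j z hz)
  have hρWS : ∀ (w : FreeMonoid I) (z : Am),
      z ∈ Submodule.span 𝔽 {z : Am | ∃ w, z = wordProd F w} →
      ρ (wordProd E w) z ∈ Submodule.span 𝔽 {z : Am | ∃ w, z = wordProd F w} := by
    intro w
    induction w using FreeMonoid.recOn with
    | one =>
      intro z hz; rw [hwpE1, hρ1, Module.End.one_apply]; exact hz
    | of_mul x xs ihxs =>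
      intro z hz
      rw [hwpEc, hρanti, Module.End.mul_apply]
      exact ihxs _ (hρES x z hz)
  have hρXS : ∀ (μx : I →₀ ℕ) (x : Ap), HomogIn 𝔽 E μx x → ∀ (z : Am),
      z ∈ Submodule.span 𝔽 {z : Am | ∃ w, z = wordProd F w} →
      ρ x z ∈ Submodule.span 𝔽 {z : Am | ∃ w, z = wordProd F w} := by
    intro μx x hx
    refine Submodule.span_induction ?_ ?_ ?_ ?_ hx
    · rintro x ⟨w, _, rfl⟩ z hz; exact hρWS w z hz
    · intro z hz; rw [map_zero, LinearMap.zero_apply]; exact zero_mem _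
    · intro a b _ _ iha ihb z hz
      rw [map_add, LinearMap.add_apply]; exact add_mem (iha z hz) (ihb z hz)
    · intro c a _ iha z hz
      rw [map_smul, LinearMap.smul_apply]; exact Submodule.smul_mem _ _ (iha z hz)
  have hyS : ∀ (μy : I →₀ ℕ) (y : Am), HomogIn 𝔽 F μy y →
      y ∈ Submodule.span 𝔽 {z : Am | ∃ w, z = wordProd F w} := by
    intro μy y hy
    refine Submodule.span_mono ?_ hy
    rintro z ⟨w, _, rfl⟩; exact ⟨w, rfl⟩
  -- counit kills nontrivial words
  have hεmw : ∀ (w : FreeMonoid I) (τ : I →₀ ℤ),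
      extZ ξg (nz (wt w)) τ * εm (wordProd F w) = εm (wordProd F w) := by
    intro w τ
    induction w using FreeMonoid.recOn with
    | one => rw [hwt1, hnz0, extZ_zero_left, one_mul]
    | of_mul x xs _ =>
      rw [hwpFc, map_mul, hεmF, zero_mul, mul_zero]
  -- the J-part
  have hJY : ∀ (ν₂ τ₁ τ₂ : I →₀ ℤ) (u : Am),
      u ∈ Submodule.span 𝔽 {z : Am | ∃ w, z = wordProd F w} →
      εm (ρ (Jp ν₂) (K' τ₁ * u * J' τ₂)) = extZ ξg τ₁ ν₂ * εm u := by
    intro ν₂ τ₁ τ₂ u hu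
    refine Submodule.span_induction ?_ ?_ ?_ ?_ hu
    · rintro u ⟨w, rfl⟩
      have heig : ρ (Jp ν₂) (K' τ₁ * wordProd F w * J' τ₂)
          = (extZ ξg τ₁ ν₂ * extZ ξg (nz (wt w)) ν₂) • (K' τ₁ * wordProd F w * J' τ₂) :=
        eigen_gen ρ hρanti hρ1 Jp hJ0 hJadd
          (fun ν => extZ ξg τ₁ ν * extZ ξg (nz (wt w)) ν)
          (by simp only [extZ_zero_right, one_mul])
          (fun a b => by simp only [extZ_add_right ξg hξne]; ring)
          _ (fun i => by rw [hρJ, hcJ]) (fun i => by rw [hρJinv, hcJ]) ν₂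
      rw [heig, map_smul, smul_eq_mul, map_mul, map_mul, hεmK', hεmJ', one_mul, mul_one,
        mul_assoc, hεmw]
    · simp
    · intro a b _ _ iha ihb
      simp only [mul_add, add_mul, map_add, smul_add]
      rw [iha, ihb]
    · intro c a _ iha
      rw [mul_smul_comm, smul_mul_assoc, map_smul, map_smul, smul_eq_mul, iha, map_smul,
        smul_eq_mul]
      ring
  -- assembly
  intro ν₁ ν₂ τ₁ τ₂ μx μy x y hx hy
  have h1 : ρ (K ν₁ * x * Jp ν₂) = ρ (Jp ν₂) * (ρ x * ρ (K ν₁)) := by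
    rw [hρanti, hρanti]
  rw [h1, Module.End.mul_apply, Module.End.mul_apply, hKY ν₁ τ₁ τ₂ μy y hy, map_smul,
    hstepX μx x hx τ₁ τ₂ y, map_smul, map_smul, map_smul, map_smul, smul_eq_mul, smul_eq_mul,
    hJY ν₂ τ₁ τ₂ _ (hρXS μx x hx y (hyS μy y hy))]
  ring
end
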